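/- arXiv:2410.11318 — 9 statements merged into one kernel-verified Lean document; each statement's English description precedes it below -/
import Mathlib

section
/- Let n be a positive integer and write 3n+1 = 2^ℓ · m with m odd (and gcd(6,m)=1 since 3 ∤ 3n+1). Then the sign of ∑_{d | m} (3/d)·d equals (3/m) = (-1)^{(m-1)/2} · (m/3), where (3/d) denotes the Kronecker symbol. -/
open Finset

private def gfun : ArithmeticFunction ℤ := ⟨fun d => jacobiSym 3 d * d, by simp⟩

private lemma gfun_mult : gfun.IsMultiplicative := by
  refine ⟨by simp [gfun, jacobiSym.one_right], ?_⟩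
  intro m n hmn
  rcases eq_or_ne m 0 with rfl | hm
  · simp [gfun]
  rcases eq_or_ne n 0 with rfl | hn
  · simp [gfun]
  simp only [gfun, ArithmeticFunction.coe_mk]
  push_cast
  rw [jacobiSym.mul_right' 3 hm hn]; ring

private lemma aux_alt (p : ℤ) (hp : 2 ≤ p) (n : ℕ) :
    1 ≤ (-1) ^ n * ∑ i ∈ Finset.range (n + 1), (-p) ^ i ∧
      (-1) ^ n * ∑ i ∈ Finset.range (n + 1), (-p) ^ i ≤ p ^ n := by
  induction n with
  | zero => simp
  | succ n ih =>
    obtain ⟨ih1, ih2⟩ := ih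
    rw [Finset.sum_range_succ]
    have hpn : (1 : ℤ) ≤ p ^ n := one_le_pow₀ (by linarith)
    have hps : p ^ (n + 1) = p * p ^ n := pow_succ' p n
    have hkey : (-1 : ℤ) ^ (n + 1) * (-p) ^ (n + 1) = p ^ (n + 1) := by
      rw [← mul_pow]; ring_nf
    have hexp : ((-1 : ℤ)) ^ (n + 1) = -(-1) ^ n := by ring
    have heq : (-1 : ℤ) ^ (n + 1) * (∑ i ∈ Finset.range (n + 1), (-p) ^ i + (-p) ^ (n + 1)) =
        p ^ (n + 1) - (-1) ^ n * ∑ i ∈ Finset.range (n + 1), (-p) ^ i := by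
      rw [mul_add, hkey, hexp]; ring
    rw [heq]
    constructor <;> nlinarith

private lemma key_sign : ∀ m : ℕ, Odd m → ¬ (3 ∣ m) →
    Int.sign (∑ d ∈ m.divisors, jacobiSym 3 d * (d : ℤ)) = jacobiSym 3 m := by
  intro m
  induction m using Nat.recOnPosPrimePosCoprime with
  | zero => intro h; simp at h
  | one => intro _ _; simp [jacobiSym.one_right]
  | prime_pow p n pp hn =>
    intro hodd h3
    have pp' : p.Prime := pp
    have hp3 : p ≠ 3 := by rintro rfl; exact h3 (dvd_pow_self 3 hn.ne')
    have hp2' : p ≠ 2 := by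
      rintro rfl
      exact (Nat.not_odd_iff_even.mpr (Nat.even_pow.mpr ⟨even_two, hn.ne'⟩)) hodd
    have hpodd : Odd p := pp'.odd_of_ne_two hp2'
    have hp2 : 2 ≤ (p : ℤ) := by exact_mod_cast pp'.two_le
    have hcop : Nat.Coprime 3 p := ((Nat.coprime_primes Nat.prime_three pp').mpr
      (fun h => hp3 h.symm))
    have hgcd : Int.gcd 3 (p : ℤ) = 1 := by simpa [Int.gcd] using hcop
    rw [Nat.sum_divisors_prime_pow pp', jacobiSym.pow_right]
    have hrw : ∀ i : ℕ, jacobiSym 3 (p ^ i) * ((p:ℤ) ^ i) = (jacobiSym 3 p * p) ^ i := by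
      intro i; rw [jacobiSym.pow_right, mul_pow]
    simp only [Nat.cast_pow, hrw]
    rcases jacobiSym.eq_one_or_neg_one hgcd with h1 | h1
    · rw [h1]
      have hpos : 0 < ∑ i ∈ Finset.range (n + 1), ((1 : ℤ) * p) ^ i := by
        apply Finset.sum_pos
        · intro i _; positivity
        · exact Finset.nonempty_range_iff.mpr (Nat.succ_ne_zero n)
      rw [Int.sign_eq_one_iff_pos.mpr hpos, one_pow]
    · rw [h1]
      simp only [neg_one_mul]
      obtain ⟨hl, hu⟩ := aux_alt p hp2 n
      rcases Nat.even_or_odd n with he | ho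
      · rw [he.neg_one_pow] at hl ⊢
        rw [one_mul] at hl
        exact Int.sign_eq_one_iff_pos.mpr (by linarith)
      · rw [ho.neg_one_pow] at hl ⊢
        rw [neg_one_mul] at hl
        exact Int.sign_eq_neg_one_iff_neg.mpr (by linarith)
  | coprime a b ha hb hab iha ihb =>
    intro hodd h3
    have hodd' := Nat.odd_mul.mp hodd
    have ha0 : a ≠ 0 := by omega
    have hb0 : b ≠ 0 := by omega
    have hmul : (∑ d ∈ (a * b).divisors, jacobiSym 3 d * (d : ℤ)) =
        (∑ d ∈ a.divisors, jacobiSym 3 d * (d : ℤ)) *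
          (∑ d ∈ b.divisors, jacobiSym 3 d * (d : ℤ)) := by
      have hz : ∀ x : ℕ, ((gfun * ArithmeticFunction.zeta) : ArithmeticFunction ℤ) x =
          ∑ d ∈ x.divisors, jacobiSym 3 d * (d : ℤ) := by
        intro x
        rw [ArithmeticFunction.coe_mul_zeta_apply]
        simp only [gfun, ArithmeticFunction.coe_mk]
      rw [← hz, ← hz, ← hz]
      exact (gfun_mult.mul ArithmeticFunction.isMultiplicative_zeta.natCast).2 hab
    rw [hmul, Int.sign_mul, iha hodd'.1 (fun hd => h3 (hd.mul_right b)),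
      ihb hodd'.2 (fun hd => h3 (hd.mul_left a)), ← jacobiSym.mul_right' 3 ha0 hb0]

/-- Writing `3n+1 = 2^ℓ m` with `m` odd, the sign of `∑_{d ∣ m} (3/d) d` equals
`(3/m) = (-1)^((m-1)/2) (m/3)`, where `(3/d)` is the Kronecker (Jacobi) symbol. -/
theorem stmt3 (n ℓ m : ℕ) (hn : 0 < n) (hm : Odd m) (h : 3 * n + 1 = 2 ^ ℓ * m) :
    Int.sign (∑ d ∈ m.divisors, jacobiSym 3 d * (d : ℤ)) = jacobiSym 3 m ∧
      jacobiSym 3 m = (-1) ^ ((m - 1) / 2) * jacobiSym (m : ℤ) 3 := by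
  have h3m : ¬ (3 ∣ m) := by
    intro hd
    have : (3 : ℕ) ∣ 3 * n + 1 := h ▸ hd.mul_left (2 ^ ℓ)
    omega
  refine ⟨key_sign m hm h3m, ?_⟩
  have hqr := jacobiSym.quadratic_reciprocity (by decide : Odd 3) hm
  norm_num at hqr
  rw [hqr]
  congr 2
  obtain ⟨k, hk⟩ := hm
  omega
end

section
/- For every odd positive integer n, the sign of ∑_{d | n} (-1/d) · d^2 equals (-1)^{#{p prime : p | n, p ≡ 3 (mod 4), ord_p(n) odd}}, which is 1 if n ≡ 1 (mod 4) and -1 if n ≡ 3 (mod 4). -/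
open Finset ArithmeticFunction

private def chiF : ArithmeticFunction ℤ :=
  ⟨fun d => jacobiSym (-1) d * (d : ℤ) ^ 2, by simp⟩

private lemma chiF_apply (d : ℕ) : chiF d = jacobiSym (-1) d * (d : ℤ) ^ 2 := rfl

private lemma chiF_mult : chiF.IsMultiplicative := by
  rw [ArithmeticFunction.IsMultiplicative.iff_ne_zero]
  refine ⟨by simp [chiF_apply], ?_⟩
  intro m n hm hn hmn
  haveI : NeZero m := ⟨hm⟩
  haveI : NeZero n := ⟨hn⟩
  simp only [chiF_apply, jacobiSym.mul_right, Nat.cast_mul]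
  ring

private def Fj : ArithmeticFunction ℤ := (ArithmeticFunction.zeta : ArithmeticFunction ℤ) * chiF

private lemma Fj_apply (n : ℕ) :
    Fj n = ∑ d ∈ n.divisors, jacobiSym (-1) d * (d : ℤ) ^ 2 := by
  rw [show Fj n = ((ArithmeticFunction.zeta : ArithmeticFunction ℤ) * chiF) n from rfl,
    ArithmeticFunction.coe_zeta_mul_apply]
  exact Finset.sum_congr rfl fun d _ => chiF_apply d

private lemma Fj_mult : Fj.IsMultiplicative :=
  ArithmeticFunction.isMultiplicative_zeta.natCast.mul chiF_mult

private lemma sign_prod {α : Type*} (s : Finset α) (f : α → ℤ) :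
    Int.sign (∏ i ∈ s, f i) = ∏ i ∈ s, Int.sign (f i) := by
  classical
  induction s using Finset.induction_on with
  | empty => simp
  | insert _ _ h ih => rw [Finset.prod_insert h, Finset.prod_insert h, Int.sign_mul, ih]

private lemma alt_sum (q : ℤ) (hq : 2 ≤ q) (e : ℕ) :
    1 ≤ (-1) ^ e * (∑ i ∈ range (e + 1), (-1) ^ i * (q ^ 2) ^ i) ∧
      (-1) ^ e * (∑ i ∈ range (e + 1), (-1) ^ i * (q ^ 2) ^ i) ≤ (q ^ 2) ^ e := by
  induction e with
  | zero => simp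
  | succ e ih =>
    obtain ⟨h1, h2⟩ := ih
    have ha : ((-1 : ℤ) ^ e) * ((-1) ^ e) = 1 := by
      rw [← pow_add]
      exact Even.neg_one_pow ⟨e, by ring⟩
    have hQ : (4 : ℤ) ≤ q ^ 2 := by nlinarith
    have hpow : (1 : ℤ) ≤ (q ^ 2) ^ e := one_le_pow₀ (by nlinarith)
    set S := ∑ i ∈ range (e + 1), (-1 : ℤ) ^ i * (q ^ 2) ^ i with hS
    have hc : ((q : ℤ) ^ 2) ^ (e + 1) = (q ^ 2) ^ e * q ^ 2 := pow_succ _ _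
    rw [Finset.sum_range_succ, ← hS]
    have key : (-1 : ℤ) ^ (e + 1) * (S + (-1) ^ (e + 1) * (q ^ 2) ^ (e + 1))
        = (q ^ 2) ^ (e + 1) - (-1) ^ e * S := by
      rw [pow_succ (-1 : ℤ) e]
      linear_combination ((q ^ 2) ^ (e + 1)) * ha
    rw [key, hc]
    constructor
    · nlinarith [h1, h2, hQ, hpow]
    · nlinarith [h1, h2, hQ, hpow]

private lemma sign_Fj_pp {p : ℕ} (hp : p.Prime) (hp2 : p % 2 = 1) (e : ℕ) :
    Int.sign (Fj (p ^ e)) = if p % 4 = 3 ∧ Odd e then -1 else 1 := by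
  have hsum : Fj (p ^ e) = ∑ i ∈ range (e + 1), (ZMod.χ₄ p : ℤ) ^ i * ((p : ℤ) ^ 2) ^ i := by
    rw [Fj_apply, Nat.sum_divisors_prime_pow hp]
    refine Finset.sum_congr rfl fun i _ => ?_
    rw [jacobiSym.pow_right, jacobiSym.at_neg_one (Nat.odd_iff.mpr hp2)]
    push_cast
    ring
  have hp4 : p % 4 = 1 ∨ p % 4 = 3 := by
    have h1 : p % 4 % 2 = p % 2 := Nat.mod_mod_of_dvd p (by norm_num)
    omega
  have hq : (2 : ℤ) ≤ (p : ℤ) := by exact_mod_cast hp.two_le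
  rcases hp4 with h4 | h4
  · have hchi : ZMod.χ₄ p = 1 := ZMod.χ₄_nat_one_mod_four h4
    have hpos : 0 < Fj (p ^ e) := by
      rw [hsum, hchi]
      simp only [Int.cast_one, one_pow, one_mul]
      apply Finset.sum_pos
      · intro i _
        positivity
      · exact ⟨0, by simp⟩
    rw [Int.sign_eq_one_iff_pos.mpr hpos, if_neg (by rintro ⟨h3, -⟩; omega)]
  · have hchi : ZMod.χ₄ p = -1 := ZMod.χ₄_nat_three_mod_four h4
    have hsum' : Fj (p ^ e) = ∑ i ∈ range (e + 1), (-1) ^ i * ((p : ℤ) ^ 2) ^ i := by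
      rw [hsum, hchi]
    obtain ⟨h1, _⟩ := alt_sum (p : ℤ) hq e
    rcases Nat.even_or_odd e with he | he
    · have : (0 : ℤ) < Fj (p ^ e) := by
        rw [hsum']
        have hne : ((-1 : ℤ)) ^ e = 1 := he.neg_one_pow
        nlinarith [h1]
      rw [Int.sign_eq_one_iff_pos.mpr this,
        if_neg (fun h => (Nat.not_odd_iff_even.mpr he) h.2)]
    · have : Fj (p ^ e) < 0 := by
        rw [hsum']
        have hne : ((-1 : ℤ)) ^ e = -1 := he.neg_one_pow
        nlinarith [h1]
      rw [Int.sign_eq_neg_one_iff_neg.mpr this, if_pos ⟨h4, he⟩]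

/-- For odd positive `n`, the sign of `∑_{d ∣ n} (-1/d) d^2` equals
`(-1)^{#{p ∣ n : p ≡ 3 (mod 4), ord_p(n) odd}}`, which is `1` if `n ≡ 1 (mod 4)` and
`-1` if `n ≡ 3 (mod 4)`. -/
theorem stmt4 (n : ℕ) (hn : 0 < n) (hodd : Odd n) :
    Int.sign (∑ d ∈ n.divisors, jacobiSym (-1) d * (d : ℤ) ^ 2)
        = (-1) ^ ((n.primeFactors.filter
            (fun p => p % 4 = 3 ∧ Odd (n.factorization p))).card) ∧
      Int.sign (∑ d ∈ n.divisors, jacobiSym (-1) d * (d : ℤ) ^ 2)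
        = (if n % 4 = 1 then 1 else -1) := by
  classical
  have hodd' : ∀ p ∈ n.primeFactors, p % 2 = 1 := by
    intro p hp
    have hpp := Nat.prime_of_mem_primeFactors hp
    have hdvd := Nat.dvd_of_mem_primeFactors hp
    rcases Nat.even_or_odd p with he | ho
    · exfalso
      have : (2 : ℕ) ∣ n := dvd_trans he.two_dvd hdvd
      exact (Nat.not_even_iff_odd.mpr hodd) (even_iff_two_dvd.mpr this)
    · exact Nat.odd_iff.mp ho
  -- sign as a product over prime factors
  have hsign : Int.sign (∑ d ∈ n.divisors, jacobiSym (-1) d * (d : ℤ) ^ 2)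
      = ∏ p ∈ n.primeFactors,
          (if p % 4 = 3 ∧ Odd (n.factorization p) then (-1 : ℤ) else 1) := by
    rw [← Fj_apply,
      ArithmeticFunction.IsMultiplicative.multiplicative_factorization Fj Fj_mult hn.ne',
      Nat.prod_factorization_eq_prod_primeFactors, sign_prod]
    exact Finset.prod_congr rfl fun p hp =>
      sign_Fj_pp (Nat.prime_of_mem_primeFactors hp) (hodd' p hp) _
  have hprod : ∏ p ∈ n.primeFactors,
      (if p % 4 = 3 ∧ Odd (n.factorization p) then (-1 : ℤ) else 1)
      = (-1) ^ ((n.primeFactors.filter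
          (fun p => p % 4 = 3 ∧ Odd (n.factorization p))).card) := by
    rw [Finset.prod_ite, Finset.prod_const, Finset.prod_const, one_pow, mul_one]
  -- χ₄ n computes the same product
  have hchi : (ZMod.χ₄ n : ℤ) = ∏ p ∈ n.primeFactors,
      (if p % 4 = 3 ∧ Odd (n.factorization p) then (-1 : ℤ) else 1) := by
    conv_lhs => rw [← Nat.factorization_prod_pow_eq_self hn.ne']
    rw [Nat.prod_factorization_eq_prod_primeFactors, Nat.cast_prod, map_prod]
    refine Finset.prod_congr rfl fun p hp => ?_
    have hpp := Nat.prime_of_mem_primeFactors hp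
    have h1 : p % 4 % 2 = p % 2 := Nat.mod_mod_of_dvd p (by norm_num)
    have hp2 := hodd' p hp
    have hp4 : p % 4 = 1 ∨ p % 4 = 3 := by omega
    rw [Nat.cast_pow, map_pow]
    rcases hp4 with h4 | h4
    · rw [ZMod.χ₄_nat_one_mod_four h4]
      simp [h4]
    · rw [ZMod.χ₄_nat_three_mod_four h4]
      rcases Nat.even_or_odd (n.factorization p) with he | ho
      · rw [(he.neg_one_pow : ((-1 : ℤ)) ^ (n.factorization p) = 1),
          if_neg (fun h => (Nat.not_odd_iff_even.mpr he) h.2)]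
      · rw [(ho.neg_one_pow : ((-1 : ℤ)) ^ (n.factorization p) = -1), if_pos ⟨h4, ho⟩]
  have hmod : (ZMod.χ₄ n : ℤ) = if n % 4 = 1 then 1 else -1 := by
    have h1 : n % 4 % 2 = n % 2 := Nat.mod_mod_of_dvd n (by norm_num)
    have h2 : n % 2 = 1 := Nat.odd_iff.mp hodd
    have h4 : n % 4 = 1 ∨ n % 4 = 3 := by omega
    rcases h4 with h4 | h4
    · rw [ZMod.χ₄_nat_one_mod_four h4, if_pos h4]
    · rw [ZMod.χ₄_nat_three_mod_four h4, if_neg (by omega)]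
  exact ⟨hsign.trans hprod, hsign.trans (hchi ▸ hmod)⟩
end

section
/- Let n be a positive integer with n ≡ 1 (mod 4) and 3 | n. Write n = 3^ℓ m with 3 ∤ m and ℓ ≥ 1. Then ∑_{d|n} (-1/d) d^2 + 6 ∑_{d | (n/3)} (-1/d) d^2 = (∑_{d|m} (-1/d) d^2) · (7 + (-1)^ℓ 3^{2ℓ+1})/10, and this quantity is strictly positive. -/
open Finset ArithmeticFunction

/-- The function `d ↦ (-1/d) d²` as an arithmetic function. -/
private def Jfun : ArithmeticFunction ℤ :=
  ⟨fun d => jacobiSym (-1) d * (d : ℤ) ^ 2, by simp⟩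

private lemma Jfun_apply (d : ℕ) : Jfun d = jacobiSym (-1) d * (d : ℤ) ^ 2 := rfl

private lemma Jfun_mult : Jfun.IsMultiplicative := by
  constructor
  · simp [Jfun_apply, jacobiSym.one_right]
  · intro a b hab
    rcases eq_or_ne a 0 with rfl | ha
    · simp [Jfun_apply]
    rcases eq_or_ne b 0 with rfl | hb
    · simp [Jfun_apply]
    simp only [Jfun_apply, Nat.cast_mul]
    rw [jacobiSym.mul_right' _ ha hb]
    ring

/-- Divisor sum of `Jfun`. -/
private def Gfun : ArithmeticFunction ℤ := ↑zeta * Jfun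

private lemma Gfun_apply (n : ℕ) :
    Gfun n = ∑ d ∈ n.divisors, jacobiSym (-1) d * (d : ℤ) ^ 2 := by
  rw [Gfun, coe_zeta_mul_apply]
  rfl

private lemma Gfun_mult : Gfun.IsMultiplicative :=
  isMultiplicative_zeta.natCast.mul Jfun_mult

private lemma geom (x : ℤ) (k : ℕ) :
    (x - 1) * ∑ i ∈ range (k + 1), x ^ i = x ^ (k + 1) - 1 := by
  simpa using (geom_sum_mul x (k + 1)).symm ▸ (mul_comm _ _)

/-- `(-1/3^i) = (-1)^i` etc.: value of `Gfun` at powers of 3. -/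
private lemma jacobi_neg_one_three : jacobiSym (-1) 3 = -1 := by
  rw [jacobiSym.at_neg_one (by decide)]
  decide

private lemma Gfun_three_pow (k : ℕ) :
    Gfun (3 ^ k) = ∑ i ∈ range (k + 1), (-9 : ℤ) ^ i := by
  rw [Gfun_apply, Nat.sum_divisors_prime_pow (by norm_num : Nat.Prime 3)]
  refine Finset.sum_congr rfl fun i _ => ?_
  rw [jacobiSym.pow_right, jacobi_neg_one_three, Nat.cast_pow]
  rw [show ((3:ℕ):ℤ) = 3 from rfl, ← pow_mul, pow_mul', ← mul_pow]
  norm_num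

private lemma ten_G_three_pow (k : ℕ) :
    10 * Gfun (3 ^ k) = 1 - (-9 : ℤ) ^ (k + 1) := by
  have := geom (-9) k
  rw [Gfun_three_pow]
  linarith

/-- Positivity: for odd positive `m`, `(-1/m) · G m > 0`. -/
private lemma pos_jacobi_mul_G : ∀ m : ℕ, 0 < m → m % 2 = 1 →
    0 < jacobiSym (-1) m * Gfun m := by
  intro m
  induction m using Nat.recOnPosPrimePosCoprime with
  | zero => intro h _; exact absurd h (lt_irrefl 0)
  | one =>
    intro _ _
    rw [Gfun_mult.map_one, jacobiSym.one_right]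
    norm_num
  | prime_pow p k hpp hk =>
    intro _ hodd
    have hp' : p.Prime := hpp
    have hpo : Odd p := by
      rcases hp'.eq_two_or_odd' with h2 | h
      · exfalso
        subst h2
        have : Even (2 ^ k) := (Nat.even_pow).mpr ⟨even_two, hk.ne'⟩
        have := Nat.even_iff.mp this
        omega
      · exact h
    have hp3 : 3 ≤ p := by
      have h2 := hp'.two_le
      have := Nat.odd_iff.mp hpo
      omega
    have hgcd : Int.gcd (-1) p = 1 := by simp
    have hS : Gfun (p ^ k) = ∑ i ∈ range (k + 1), (jacobiSym (-1) p * (p : ℤ) ^ 2) ^ i := by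
      rw [Gfun_apply, Nat.sum_divisors_prime_pow hp']
      refine Finset.sum_congr rfl fun i _ => ?_
      rw [jacobiSym.pow_right, Nat.cast_pow, ← pow_mul, pow_mul', mul_pow]
    have hj : jacobiSym (-1) (p ^ k) = (jacobiSym (-1) p) ^ k := jacobiSym.pow_right _ _ _
    rcases jacobiSym.eq_one_or_neg_one hgcd with hc | hc
    · rw [hj, hc, hS, hc, one_pow, one_mul]
      apply Finset.sum_pos
      · intro i _
        have : (0 : ℤ) < p := by exact_mod_cast hp'.pos
        positivity
      · exact Finset.nonempty_range_add_one
    · rw [hj, hc, hS, hc]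
      set x : ℤ := (p : ℤ) ^ 2 with hx
      have hx9 : (9 : ℤ) ≤ x := by
        have : (3 : ℤ) ≤ (p : ℤ) := by exact_mod_cast hp3
        nlinarith
      set S : ℤ := ∑ i ∈ range (k + 1), (-1 * x) ^ i with hSdef
      set a : ℤ := (-1 : ℤ) ^ k with ha
      have hsq : a * a = 1 := by rw [ha, ← mul_pow]; norm_num
      have h1 : (-1 * x - 1) * S = (-1) ^ (k + 1) * x ^ (k + 1) - 1 := by
        rw [hSdef, geom (-1 * x) k, mul_pow]
      have h2 : ((-1 : ℤ)) ^ (k + 1) = -a := by rw [ha, pow_succ]; ring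
      rw [h2] at h1
      have key : (x + 1) * (a * S) = x ^ (k + 1) + a := by
        linear_combination (-a) * h1 + x ^ (k + 1) * hsq
      have hxk : (9 : ℤ) ≤ x ^ (k + 1) :=
        le_trans hx9 (le_self_pow₀ (by linarith) (Nat.succ_ne_zero k))
      have haval : a = 1 ∨ a = -1 := by
        rcases Nat.even_or_odd k with h | h
        · left; rw [ha, h.neg_one_pow]
        · right; rw [ha, h.neg_one_pow]
      have hpos : 0 < (x + 1) * (a * S) := by
        rw [key]; rcases haval with h | h <;> rw [h] <;> linarith
      by_contra hcon
      push_neg at hcon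
      have : (x + 1) * (a * S) ≤ 0 := mul_nonpos_of_nonneg_of_nonpos (by linarith) hcon
      linarith
  | coprime a b ha hb hab iha ihb =>
    intro _ hodd
    have hodd' : Odd (a * b) := Nat.odd_iff.mpr hodd
    rw [Nat.odd_mul] at hodd'
    have ha0 : a ≠ 0 := by omega
    have hb0 : b ≠ 0 := by omega
    rw [jacobiSym.mul_right' _ ha0 hb0, Gfun_mult.map_mul_of_coprime hab,
      mul_mul_mul_comm]
    exact mul_pos (iha (by omega) (Nat.odd_iff.mp hodd'.1))
      (ihb (by omega) (Nat.odd_iff.mp hodd'.2))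

/-- For `n ≡ 1 (mod 4)` with `n = 3^ℓ m`, `ℓ ≥ 1`, `3 ∤ m`:
`∑_{d∣n} (-1/d) d² + 6∑_{d∣(n/3)} (-1/d) d²
  = (∑_{d∣m} (-1/d) d²) (7 + (-1)^ℓ 3^{2ℓ+1})/10 > 0`
(stated with the factor `10` multiplied out). -/
theorem stmt5 (n ℓ m : ℕ) (hn : 0 < n) (h4 : n % 4 = 1) (hl : 1 ≤ ℓ)
    (h3m : ¬ 3 ∣ m) (hnm : n = 3 ^ ℓ * m) :
    10 * ((∑ d ∈ n.divisors, jacobiSym (-1) d * (d : ℤ) ^ 2)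
          + 6 * ∑ d ∈ (n / 3).divisors, jacobiSym (-1) d * (d : ℤ) ^ 2)
        = (∑ d ∈ m.divisors, jacobiSym (-1) d * (d : ℤ) ^ 2)
            * (7 + (-1) ^ ℓ * 3 ^ (2 * ℓ + 1)) ∧
      0 < (∑ d ∈ n.divisors, jacobiSym (-1) d * (d : ℤ) ^ 2)
          + 6 * ∑ d ∈ (n / 3).divisors, jacobiSym (-1) d * (d : ℤ) ^ 2 := by
  obtain ⟨k, rfl⟩ : ∃ k, ℓ = k + 1 := ⟨ℓ - 1, by omega⟩
  have hodd : n % 2 = 1 := by omega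
  have hm0 : 0 < m := by
    rcases Nat.eq_zero_or_pos m with rfl | h
    · rw [hnm, mul_zero] at hn; exact absurd hn (lt_irrefl 0)
    · exact h
  have hmodd : m % 2 = 1 := by
    have h' : Odd (3 ^ (k + 1) * m) := hnm ▸ Nat.odd_iff.mpr hodd
    rw [Nat.odd_mul] at h'
    exact Nat.odd_iff.mp h'.2
  have hcop3 : Nat.Coprime 3 m := (Nat.Prime.coprime_iff_not_dvd (by norm_num)).mpr h3m
  have hdiv : n / 3 = 3 ^ k * m := by
    rw [hnm, pow_succ, mul_comm (3 ^ k) 3, mul_assoc,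
      Nat.mul_div_cancel_left _ (by norm_num)]
  have hGn : (∑ d ∈ n.divisors, jacobiSym (-1) d * (d : ℤ) ^ 2)
      = Gfun (3 ^ (k + 1)) * Gfun m := by
    rw [← Gfun_apply, hnm, Gfun_mult.map_mul_of_coprime (hcop3.pow_left _)]
  have hGd : (∑ d ∈ (n / 3).divisors, jacobiSym (-1) d * (d : ℤ) ^ 2)
      = Gfun (3 ^ k) * Gfun m := by
    rw [← Gfun_apply, hdiv, Gfun_mult.map_mul_of_coprime (hcop3.pow_left _)]
  have hGm : (∑ d ∈ m.divisors, jacobiSym (-1) d * (d : ℤ) ^ 2) = Gfun m :=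
    (Gfun_apply m).symm
  have h1 : 10 * Gfun (3 ^ (k + 1)) = 1 - (-9 : ℤ) ^ (k + 2) := ten_G_three_pow (k + 1)
  have h0 : 10 * Gfun (3 ^ k) = 1 - (-9 : ℤ) ^ (k + 1) := ten_G_three_pow k
  have hr : (7 : ℤ) + (-1) ^ (k + 1) * 3 ^ (2 * (k + 1) + 1)
      = (1 - (-9) ^ (k + 2)) + 6 * (1 - (-9) ^ (k + 1)) := by
    have e1 : ((-9 : ℤ)) ^ (k + 1) = (-1) ^ (k + 1) * 9 ^ (k + 1) := by
      rw [show (-9 : ℤ) = -1 * 9 by norm_num, mul_pow]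
    have e2 : ((-9 : ℤ)) ^ (k + 2) = (-1) ^ (k + 2) * 9 ^ (k + 2) := by
      rw [show (-9 : ℤ) = -1 * 9 by norm_num, mul_pow]
    have e3 : (3 : ℤ) ^ (2 * (k + 1) + 1) = 27 * 9 ^ k := by
      rw [show 2 * (k + 1) + 1 = 2 * k + 3 by ring, pow_add, pow_mul]
      norm_num [mul_comm]
    rw [e1, e2, e3]
    ring
  have heq : 10 * ((∑ d ∈ n.divisors, jacobiSym (-1) d * (d : ℤ) ^ 2)
          + 6 * ∑ d ∈ (n / 3).divisors, jacobiSym (-1) d * (d : ℤ) ^ 2)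
        = (∑ d ∈ m.divisors, jacobiSym (-1) d * (d : ℤ) ^ 2)
            * (7 + (-1) ^ (k + 1) * 3 ^ (2 * (k + 1) + 1)) := by
    rw [hGn, hGd, hGm]
    linear_combination Gfun m * h1 + 6 * Gfun m * h0 - Gfun m * hr
  refine ⟨heq, ?_⟩
  -- positivity
  have P : 0 < jacobiSym (-1) m * Gfun m := pos_jacobi_mul_G m hm0 hmodd
  have hjn : jacobiSym (-1) n = 1 := by
    rw [jacobiSym.at_neg_one (Nat.odd_iff.mpr hodd)]
    exact_mod_cast ZMod.χ₄_nat_one_mod_four h4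
  have hsq : ((-1 : ℤ)) ^ (k + 1) * (-1) ^ (k + 1) = 1 := by
    rw [← mul_pow]; norm_num
  have hjm : jacobiSym (-1) m = (-1 : ℤ) ^ (k + 1) := by
    have hthis : jacobiSym (-1) n = (-1 : ℤ) ^ (k + 1) * jacobiSym (-1) m := by
      rw [hnm, jacobiSym.mul_right' _ (pow_ne_zero _ (by norm_num)) hm0.ne',
        jacobiSym.pow_right, jacobi_neg_one_three]
    rw [hjn] at hthis
    linear_combination (-(-1 : ℤ) ^ (k + 1)) * hthis - jacobiSym (-1) m * hsq
  have h27 : (27 : ℤ) ≤ 3 ^ (2 * (k + 1) + 1) := by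
    calc (27 : ℤ) = 3 ^ 3 := by norm_num
    _ ≤ 3 ^ (2 * (k + 1) + 1) := pow_le_pow_right₀ (by norm_num) (by omega)
  have hC : 0 < (-1 : ℤ) ^ (k + 1) * (7 + (-1) ^ (k + 1) * 3 ^ (2 * (k + 1) + 1)) := by
    rcases Nat.even_or_odd (k + 1) with h | h
    · rw [h.neg_one_pow]; linarith
    · rw [h.neg_one_pow]; linarith
  have hGC : 0 < Gfun m * (7 + (-1 : ℤ) ^ (k + 1) * 3 ^ (2 * (k + 1) + 1)) := by
    have e : Gfun m * (7 + (-1 : ℤ) ^ (k + 1) * 3 ^ (2 * (k + 1) + 1))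
        = (jacobiSym (-1) m * Gfun m)
          * ((-1 : ℤ) ^ (k + 1) * (7 + (-1) ^ (k + 1) * 3 ^ (2 * (k + 1) + 1))) := by
      rw [hjm]
      linear_combination (Gfun m * (7 + (-1 : ℤ) ^ (k + 1) * 3 ^ (2 * (k + 1) + 1))) * hsq.symm
    rw [e]
    exact mul_pos P hC
  rw [hGm] at heq
  linarith [heq ▸ hGC]
end

section
/- For every positive integer n ≡ 2 (mod 4), the coefficient of q^n in ∏_{j≥1} (1-q^j)^4 (1-q^{2j})^2 / (1-q^{4j})^2 is zero. -/
open PowerSeries Finset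

namespace Stmt8

noncomputable section

/-- Monomial `X^e` for integer `e` (intended nonnegative). -/
def mon (e : ℤ) : PowerSeries ℤ := PowerSeries.X ^ e.toNat

lemma mon_add {a b : ℤ} (ha : 0 ≤ a) (hb : 0 ≤ b) : mon (a + b) = mon a * mon b := by
  rw [mon, mon, mon, ← pow_add]
  congr 1
  omega

lemma mon_of_nonpos {a : ℤ} (ha : a ≤ 0) : mon a = 1 := by
  rw [mon, Int.toNat_of_nonpos ha, pow_zero]

/-- Sign `(-1)^m` for integer `m`. -/
def eps (m : ℤ) : ℤ := if Even m then 1 else -1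

lemma eps_add (a b : ℤ) : eps (a + b) = eps a * eps b := by
  by_cases ha : Even a <;> by_cases hb : Even b <;>
    simp [eps, Int.even_add, ha, hb]

lemma eps_even {b : ℤ} (hb : Even b) : eps b = 1 := by simp [eps, hb]

lemma eps_odd {b : ℤ} (hb : Odd b) : eps b = -1 := by
  simp [eps, Int.not_even_iff_odd.2 hb]

/-- `q`-binomial-like coefficients with base `X^(2c)`, extended by zero outside `[0, K]`. -/
def qbz (c : ℕ) : ℕ → ℤ → PowerSeries ℤ
  | 0, k => if k = 0 then 1 else 0
  | (K+1), k => qbz c K k + mon (2*c*((K:ℤ)+1-k)) * qbz c K (k-1)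

lemma qbz_neg (c : ℕ) : ∀ (K : ℕ) {k : ℤ}, k < 0 → qbz c K k = 0 := by
  intro K
  induction K with
  | zero => intro k hk; simp [qbz]; omega
  | succ K ih =>
    intro k hk
    rw [qbz, ih hk, ih (by omega), zero_add, mul_zero]

lemma qbz_gt (c : ℕ) : ∀ (K : ℕ) {k : ℤ}, (K : ℤ) < k → qbz c K k = 0 := by
  intro K
  induction K with
  | zero => intro k hk; simp [qbz]; omega
  | succ K ih =>
    intro k hk
    rw [qbz, ih (by push_cast at hk ⊢; omega), ih (by push_cast at hk ⊢; omega),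
      zero_add, mul_zero]

lemma qbz_zero (c : ℕ) : ∀ K : ℕ, qbz c K 0 = 1 := by
  intro K
  induction K with
  | zero => simp [qbz]
  | succ K ih => rw [qbz, ih, qbz_neg c K (by norm_num), mul_zero, add_zero]

lemma pascal2 (c : ℕ) : ∀ (K : ℕ) (k : ℤ),
    qbz c (K+1) k = mon (2*c*k) * qbz c K k + qbz c K (k-1) := by
  intro K
  induction K with
  | zero =>
    intro k
    rcases eq_or_ne k 0 with rfl | h0
    · simp [qbz, mon_of_nonpos]
    rcases eq_or_ne k 1 with rfl | h1
    · show qbz c 0 1 + mon (2*c*(0+1-1)) * qbz c 0 0 = _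
      simp [qbz, mon_of_nonpos]
    · show qbz c 0 k + mon (2*c*(0+1-k)) * qbz c 0 (k-1) = _
      simp only [qbz, if_neg h0, if_neg (show k - 1 ≠ 0 by omega)]
      ring
  | succ K ih =>
    intro k
    have ecast : ((K+1:ℕ):ℤ) + 1 - k = (K:ℤ)+2-k := by push_cast; ring
    have dl : qbz c (K+1+1) k
        = qbz c (K+1) k + mon (2*c*((K:ℤ)+2-k)) * qbz c (K+1) (k-1) := by
      rw [qbz, ecast]
    have dr1 : qbz c (K+1) k = qbz c K k + mon (2*c*((K:ℤ)+1-k)) * qbz c K (k-1) := by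
      rw [qbz]
    have dr2 : qbz c (K+1) (k-1)
        = qbz c K (k-1) + mon (2*c*((K:ℤ)+2-k)) * qbz c K (k-1-1) := by
      rw [qbz, show (K:ℤ)+1-(k-1) = (K:ℤ)+2-k by ring]
    have hmid : mon (2*c*((K:ℤ)+2-k)) * (mon (2*c*(k-1)) * qbz c K (k-1))
        = mon (2*c*k) * (mon (2*c*((K:ℤ)+1-k)) * qbz c K (k-1)) := by
      rcases le_or_gt k 0 with hk | hk
      · rw [qbz_neg c K (by omega)]; ring
      rcases le_or_gt k ((K:ℤ)+1) with hk2 | hk2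
      · rw [← mul_assoc, ← mul_assoc,
          ← mon_add (mul_nonneg (by positivity) (by omega)) (mul_nonneg (by positivity) (by omega)),
          ← mon_add (mul_nonneg (by positivity) (by omega)) (mul_nonneg (by positivity) (by omega)),
          show 2*(c:ℤ)*((K:ℤ)+2-k) + 2*c*(k-1) = 2*(c:ℤ)*k + 2*c*((K:ℤ)+1-k) by ring]
      · rw [qbz_gt c K (by omega)]; ring
    conv_lhs => rw [dl, ih k, ih (k-1)]
    conv_rhs => rw [dr1, dr2]
    calc mon (2*c*k) * qbz c K k + qbz c K (k-1)
          + mon (2*c*((K:ℤ)+2-k)) * (mon (2*c*(k-1)) * qbz c K (k-1) + qbz c K (k-1-1))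
        = mon (2*c*k) * qbz c K k
          + mon (2*c*((K:ℤ)+2-k)) * (mon (2*c*(k-1)) * qbz c K (k-1))
          + (qbz c K (k-1) + mon (2*c*((K:ℤ)+2-k)) * qbz c K (k-1-1)) := by ring
      _ = _ := by rw [hmid]; ring

lemma eps_one : eps 1 = -1 := eps_odd ⟨0, by norm_num⟩

lemma eps_two : eps 2 = 1 := eps_even ⟨1, by norm_num⟩

lemma eps_succ (m : ℤ) : eps (m + 1) = -eps m := by
  rw [eps_add, eps_one, mul_neg_one]

lemma eps_add_two (m : ℤ) : eps (m + 2) = eps m := by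
  rw [eps_add, eps_two, mul_one]

lemma three_term (c : ℕ) (K : ℕ) (k : ℤ) :
    qbz c (K+2) k = mon (2*c*k) * qbz c K k
      + (1 + mon (2*c*((K:ℤ)+1))) * qbz c K (k-1)
      + mon (2*c*((K:ℤ)+2-k)) * qbz c K (k-2) := by
  have dl : qbz c (K+2) k
      = qbz c (K+1) k + mon (2*c*((K:ℤ)+2-k)) * qbz c (K+1) (k-1) := by
    rw [show K+2 = (K+1)+1 from rfl, qbz, show ((K+1:ℕ):ℤ)+1-k = (K:ℤ)+2-k by push_cast; ring]
  rw [dl, pascal2, pascal2]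
  have hmid : mon (2*c*((K:ℤ)+2-k)) * (mon (2*c*(k-1)) * qbz c K (k-1))
      = mon (2*c*((K:ℤ)+1)) * qbz c K (k-1) := by
    rcases le_or_gt k 0 with hk | hk
    · rw [qbz_neg c K (by omega)]; ring
    rcases le_or_gt k ((K:ℤ)+2) with hk2 | hk2
    · rw [← mul_assoc,
        ← mon_add (mul_nonneg (by positivity) (by omega)) (mul_nonneg (by positivity) (by omega)),
        show 2*(c:ℤ)*((K:ℤ)+2-k) + 2*c*(k-1) = 2*(c:ℤ)*((K:ℤ)+1) by ring]
    · rw [qbz_gt c K (by omega)]; ring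
  calc mon (2*c*k) * qbz c K k + qbz c K (k-1)
        + mon (2*c*((K:ℤ)+2-k)) * (mon (2*c*(k-1)) * qbz c K (k-1) + qbz c K (k-1-1))
      = mon (2*c*k) * qbz c K k + qbz c K (k-1)
        + (mon (2*c*((K:ℤ)+2-k)) * (mon (2*c*(k-1)) * qbz c K (k-1))
           + mon (2*c*((K:ℤ)+2-k)) * qbz c K (k-1-1)) := by ring
    _ = _ := by
        rw [hmid, show k-1-1 = k-2 by ring]; ring

/-- Summand of the theta-like sum. -/
def term (c g : ℕ) (k : ℤ) : PowerSeries ℤ :=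
  PowerSeries.C (R := ℤ) (eps ((g:ℤ)+k)) * mon (c*((g:ℤ)-k)^2) * qbz c (2*g) k

/-- Truncated theta-like sum (with q-binomial weights). -/
def Sg (c g : ℕ) : PowerSeries ℤ := ∑ k ∈ Icc (0:ℤ) (2*(g:ℤ)), term c g k

lemma term_eq_zero_of_out (c g : ℕ) {k : ℤ} (h : k < 0 ∨ 2*(g:ℤ) < k) : term c g k = 0 := by
  rcases h with h | h
  · rw [term, qbz_neg c _ h, mul_zero]
  · rw [term, qbz_gt c _ (by push_cast; omega), mul_zero]

lemma Sg_eq_window (c g : ℕ) {a b : ℤ} (ha : a ≤ 0) (hb : 2*(g:ℤ) ≤ b) :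
    ∑ k ∈ Icc a b, term c g k = Sg c g := by
  rw [Sg]
  symm
  apply Finset.sum_subset (Finset.Icc_subset_Icc ha hb)
  intro x hx hx'
  simp only [Finset.mem_Icc] at hx hx'
  exact term_eq_zero_of_out c g (by omega)

lemma sum_shift {M : Type*} [AddCommMonoid M] (f : ℤ → M) (a b d : ℤ) :
    ∑ k ∈ Icc a b, f (k - d) = ∑ j ∈ Icc (a-d) (b-d), f j := by
  have h : Icc a b = (Icc (a-d) (b-d)).map (addRightEmbedding d) := by
    rw [Finset.map_add_right_Icc]
    congr 1 <;> ring
  rw [h, Finset.sum_map]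
  apply Finset.sum_congr rfl
  intro j _
  simp [addRightEmbedding]

lemma Sg_succ (c g : ℕ) :
    Sg c (g+1) = (1 - mon (c*(2*(g:ℤ)+1)))^2 * Sg c g := by
  have key : ∀ k : ℤ, term c (g+1) k
      = -(mon (c*(2*(g:ℤ)+1)) * term c g k)
        + (1 + mon (2*c*(2*(g:ℤ)+1))) * term c g (k-1)
        + -(mon (c*(2*(g:ℤ)+1)) * term c g (k-2)) := by
    intro k
    have h3 := three_term c (2*g) k
    have heps2 : eps ((g:ℤ)+1+k) = eps ((g:ℤ)+(k-1)) := by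
      rw [show (g:ℤ)+1+k = ((g:ℤ)+(k-1))+2 by ring, eps_add_two]
    have heps1 : eps ((g:ℤ)+1+k) = -eps ((g:ℤ)+k) := by
      rw [show (g:ℤ)+1+k = ((g:ℤ)+k)+1 by ring, eps_succ]
    have heps3 : eps ((g:ℤ)+1+k) = -eps ((g:ℤ)+(k-2)) := by
      rw [show (g:ℤ)+1+k = (((g:ℤ)+(k-2))+1)+2 by ring, eps_add_two, eps_succ]
    have hp1 : PowerSeries.C (R := ℤ) (eps ((g:ℤ)+1+k)) * mon (c*((g:ℤ)+1-k)^2)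
        * (mon (2*c*k) * qbz c (2*g) k) = -(mon (c*(2*(g:ℤ)+1)) * term c g k) := by
      rcases lt_or_ge k 0 with hk | hk
      · rw [qbz_neg c _ hk, term, qbz_neg c _ hk]; ring
      · have hmm : mon (c*((g:ℤ)+1-k)^2) * mon (2*c*k)
            = mon (c*(2*(g:ℤ)+1)) * mon (c*((g:ℤ)-k)^2) := by
          rw [← mon_add (by positivity) (mul_nonneg (by positivity) (by omega)),
            ← mon_add (mul_nonneg (by positivity) (by omega)) (by positivity),
            show (c:ℤ)*((g:ℤ)+1-k)^2 + 2*c*k = (c:ℤ)*(2*(g:ℤ)+1) + c*((g:ℤ)-k)^2 by ring]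
        calc PowerSeries.C (R := ℤ) (eps ((g:ℤ)+1+k)) * mon (c*((g:ℤ)+1-k)^2)
              * (mon (2*c*k) * qbz c (2*g) k)
            = PowerSeries.C (R := ℤ) (eps ((g:ℤ)+1+k))
              * (mon (c*((g:ℤ)+1-k)^2) * mon (2*c*k)) * qbz c (2*g) k := by ring
          _ = _ := by rw [hmm, heps1, map_neg, term]; ring
    have hp2 : PowerSeries.C (R := ℤ) (eps ((g:ℤ)+1+k)) * mon (c*((g:ℤ)+1-k)^2)
        * ((1 + mon (2*c*(2*(g:ℤ)+1))) * qbz c (2*g) (k-1))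
        = (1 + mon (2*c*(2*(g:ℤ)+1))) * term c g (k-1) := by
      rw [term, ← heps2, show (c:ℤ)*((g:ℤ)-(k-1))^2 = (c:ℤ)*((g:ℤ)+1-k)^2 by ring]
      ring
    have hp3 : PowerSeries.C (R := ℤ) (eps ((g:ℤ)+1+k)) * mon (c*((g:ℤ)+1-k)^2)
        * (mon (2*c*(2*(g:ℤ)+2-k)) * qbz c (2*g) (k-2))
        = -(mon (c*(2*(g:ℤ)+1)) * term c g (k-2)) := by
      rcases le_or_gt k (2*(g:ℤ)+2) with hk | hk
      · have hmm : mon (c*((g:ℤ)+1-k)^2) * mon (2*c*(2*(g:ℤ)+2-k))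
            = mon (c*(2*(g:ℤ)+1)) * mon (c*((g:ℤ)-(k-2))^2) := by
          rw [← mon_add (by positivity) (mul_nonneg (by positivity) (by omega)),
            ← mon_add (mul_nonneg (by positivity) (by omega)) (by positivity),
            show (c:ℤ)*((g:ℤ)+1-k)^2 + 2*c*(2*(g:ℤ)+2-k)
              = (c:ℤ)*(2*(g:ℤ)+1) + c*((g:ℤ)-(k-2))^2 by ring]
        calc PowerSeries.C (R := ℤ) (eps ((g:ℤ)+1+k)) * mon (c*((g:ℤ)+1-k)^2)
              * (mon (2*c*(2*(g:ℤ)+2-k)) * qbz c (2*g) (k-2))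
            = PowerSeries.C (R := ℤ) (eps ((g:ℤ)+1+k))
              * (mon (c*((g:ℤ)+1-k)^2) * mon (2*c*(2*(g:ℤ)+2-k))) * qbz c (2*g) (k-2) := by
              ring
          _ = _ := by rw [hmm, heps3, map_neg, term]; ring
      · rw [qbz_gt c _ (by push_cast; omega), term, qbz_gt c _ (by push_cast; omega)]; ring
    rw [term, show 2*(g+1) = 2*g+2 from rfl, h3,
      show ((2*g:ℕ):ℤ)+1 = 2*(g:ℤ)+1 by push_cast; ring,
      show ((2*g:ℕ):ℤ)+2-k = 2*(g:ℤ)+2-k by push_cast; ring,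
      show (((g+1:ℕ)):ℤ) = (g:ℤ)+1 by push_cast; ring]
    rw [show (c:ℤ)*((g:ℤ)+1-k)^2 = (c:ℤ)*((g:ℤ)+1-k)^2 from rfl]
    calc PowerSeries.C (R := ℤ) (eps ((g:ℤ)+1+k)) * mon (c*((g:ℤ)+1-k)^2)
          * (mon (2*c*k) * qbz c (2*g) k
             + (1 + mon (2*c*(2*(g:ℤ)+1))) * qbz c (2*g) (k-1)
             + mon (2*c*(2*(g:ℤ)+2-k)) * qbz c (2*g) (k-2))
        = PowerSeries.C (R := ℤ) (eps ((g:ℤ)+1+k)) * mon (c*((g:ℤ)+1-k)^2)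
            * (mon (2*c*k) * qbz c (2*g) k)
          + PowerSeries.C (R := ℤ) (eps ((g:ℤ)+1+k)) * mon (c*((g:ℤ)+1-k)^2)
            * ((1 + mon (2*c*(2*(g:ℤ)+1))) * qbz c (2*g) (k-1))
          + PowerSeries.C (R := ℤ) (eps ((g:ℤ)+1+k)) * mon (c*((g:ℤ)+1-k)^2)
            * (mon (2*c*(2*(g:ℤ)+2-k)) * qbz c (2*g) (k-2)) := by ring
      _ = _ := by rw [hp1, hp2, hp3]
  have hW : Sg c (g+1) = ∑ k ∈ Icc (-2 : ℤ) (2*(g:ℤ)+2), term c (g+1) k := by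
    rw [Sg_eq_window c (g+1) (by norm_num) (by push_cast; omega)]
  rw [hW]
  have hsplit : ∑ k ∈ Icc (-2 : ℤ) (2*(g:ℤ)+2), term c (g+1) k
      = (∑ k ∈ Icc (-2 : ℤ) (2*(g:ℤ)+2), -(mon (c*(2*(g:ℤ)+1)) * term c g k))
        + (∑ k ∈ Icc (-2 : ℤ) (2*(g:ℤ)+2), (1 + mon (2*c*(2*(g:ℤ)+1))) * term c g (k-1))
        + (∑ k ∈ Icc (-2 : ℤ) (2*(g:ℤ)+2), -(mon (c*(2*(g:ℤ)+1)) * term c g (k-2))) := by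
    rw [← Finset.sum_add_distrib, ← Finset.sum_add_distrib]
    exact Finset.sum_congr rfl fun k _ => key k
  rw [hsplit]
  have e1 : ∑ k ∈ Icc (-2 : ℤ) (2*(g:ℤ)+2), -(mon (c*(2*(g:ℤ)+1)) * term c g k)
      = -(mon (c*(2*(g:ℤ)+1)) * Sg c g) := by
    rw [Finset.sum_neg_distrib, ← Finset.mul_sum, Sg_eq_window c g (by norm_num) (by omega)]
  have e2 : ∑ k ∈ Icc (-2 : ℤ) (2*(g:ℤ)+2), (1 + mon (2*c*(2*(g:ℤ)+1))) * term c g (k-1)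
      = (1 + mon (2*c*(2*(g:ℤ)+1))) * Sg c g := by
    rw [← Finset.mul_sum, sum_shift (term c g) (-2) (2*(g:ℤ)+2) 1,
      Sg_eq_window c g (by norm_num) (by omega)]
  have e3 : ∑ k ∈ Icc (-2 : ℤ) (2*(g:ℤ)+2), -(mon (c*(2*(g:ℤ)+1)) * term c g (k-2))
      = -(mon (c*(2*(g:ℤ)+1)) * Sg c g) := by
    rw [Finset.sum_neg_distrib, ← Finset.mul_sum, sum_shift (term c g) (-2) (2*(g:ℤ)+2) 2,
      Sg_eq_window c g (by norm_num) (by omega)]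
  rw [e1, e2, e3]
  have hsq : mon (2*c*(2*(g:ℤ)+1)) = mon (c*(2*(g:ℤ)+1)) * mon (c*(2*(g:ℤ)+1)) := by
    rw [← mon_add (by positivity) (by positivity)]
    congr 1
    ring
  rw [hsq]
  ring

/-- Product of odd-exponent factors squared. -/
def Pg (c g : ℕ) : PowerSeries ℤ := ∏ t ∈ range g, (1 - mon (c*(2*(t:ℤ)+1)))^2

lemma star (c g : ℕ) : Pg c g = Sg c g := by
  induction g with
  | zero =>
    rw [Pg, Sg]
    simp only [range_zero, prod_empty]
    rw [show (2*((0:ℕ):ℤ)) = 0 by norm_num, Finset.Icc_self, Finset.sum_singleton, term]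
    rw [qbz_zero]
    simp [eps, mon]
  | succ g ih =>
    rw [Pg, Finset.prod_range_succ, ← Pg, ih, Sg_succ]
    ring

/-- Truncated product `∏_{j=1}^m (1 - X^(2cj))`. -/
def Fp (c m : ℕ) : PowerSeries ℤ := ∏ j ∈ Ioc 0 m, (1 - mon (2*c*(j:ℤ)))

lemma Fp_zero (c : ℕ) : Fp c 0 = 1 := by simp [Fp]

lemma Fp_succ (c m : ℕ) : Fp c (m+1) = Fp c m * (1 - mon (2*c*((m:ℤ)+1))) := by
  rw [Fp, Fp, Finset.prod_Ioc_succ_top (Nat.zero_le _)]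
  push_cast
  ring

lemma cq (c : ℕ) : ∀ (K : ℕ) (k : ℤ), 0 ≤ k → k ≤ K →
    qbz c K k * (Fp c k.toNat * Fp c ((K:ℤ) - k).toNat) = Fp c K := by
  intro K
  induction K with
  | zero =>
    intro k h0 hK
    have : k = 0 := le_antisymm (by exact_mod_cast hK) h0
    subst this
    simp [qbz_zero, Fp_zero]
  | succ K ih =>
    intro k h0 hK
    rcases eq_or_ne k 0 with rfl | hk0
    · rw [qbz_zero]
      simp only [Int.toNat_zero, Fp_zero, sub_zero, one_mul]
      rw [show ((K+1:ℕ):ℤ).toNat = K+1 by omega]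
    rcases eq_or_ne k ((K:ℤ)+1) with rfl | hktop
    · have hdef : qbz c (K+1) ((K:ℤ)+1) = qbz c K (K:ℤ) := by
        rw [qbz, qbz_gt c K (show (K:ℤ) < (K:ℤ)+1 by omega),
          show (K:ℤ)+1-((K:ℤ)+1) = 0 by ring, mul_zero, mon_of_nonpos (by norm_num), one_mul,
          show (K:ℤ)+1-1 = (K:ℤ) by ring, zero_add]
      rw [hdef, show ((K+1:ℕ):ℤ) - ((K:ℤ)+1) = 0 by push_cast; ring, Int.toNat_zero, Fp_zero,
        show ((K:ℤ)+1).toNat = K+1 by omega]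
      have hIH := ih (K:ℤ) (by positivity) le_rfl
      rw [Int.toNat_natCast, sub_self, Int.toNat_zero, Fp_zero] at hIH
      rw [Fp_succ]
      calc qbz c K (K:ℤ) * (Fp c K * (1 - mon (2*c*((K:ℤ)+1))) * 1)
          = qbz c K (K:ℤ) * (Fp c K * 1) * (1 - mon (2*c*((K:ℤ)+1))) := by ring
        _ = _ := by rw [hIH]
    -- now 1 ≤ k ≤ K
    have hk1 : 1 ≤ k := by omega
    have hkK : k ≤ (K:ℤ) := by
      have h' : k ≤ (K:ℤ)+1 := by exact_mod_cast hK
      have h'' : k ≠ (K:ℤ)+1 := hktop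
      omega
    have hdef : qbz c (K+1) k = qbz c K k + mon (2*c*((K:ℤ)+1-k)) * qbz c K (k-1) := by
      rw [qbz]
    have hFk : Fp c k.toNat = Fp c (k-1).toNat * (1 - mon (2*c*k)) := by
      rw [show k.toNat = (k-1).toNat + 1 by omega, Fp_succ,
        show (((k-1).toNat:ℤ)) + 1 = k by omega]
    have hFK : Fp c (((K+1:ℕ):ℤ) - k).toNat
        = Fp c ((K:ℤ)-k).toNat * (1 - mon (2*c*((K:ℤ)+1-k))) := by
      rw [show (((K+1:ℕ):ℤ) - k).toNat = ((K:ℤ)-k).toNat + 1 by push_cast; omega, Fp_succ,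
        show ((((K:ℤ)-k).toNat:ℤ)) + 1 = (K:ℤ)+1-k by omega]
    have e1 := ih k h0 hkK
    rw [hFk] at e1
    have e2 := ih (k-1) (by omega) (by omega)
    rw [show ((K:ℤ)-(k-1)).toNat = ((K:ℤ)-k).toNat + 1 by omega, Fp_succ,
      show ((((K:ℤ)-k).toNat:ℤ)) + 1 = (K:ℤ)+1-k by omega] at e2
    have hmm : mon (2*c*((K:ℤ)+1-k)) * mon (2*c*k) = mon (2*c*((K:ℤ)+1)) := by
      rw [← mon_add (mul_nonneg (by positivity) (by omega)) (mul_nonneg (by positivity) (by omega)),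
        show 2*(c:ℤ)*((K:ℤ)+1-k) + 2*c*k = 2*(c:ℤ)*((K:ℤ)+1) by ring]
    rw [hdef, hFK, hFk, Fp_succ]
    linear_combination (1 - mon (2*c*((K:ℤ)+1-k))) * e1
      + mon (2*c*((K:ℤ)+1-k)) * (1 - mon (2*c*k)) * e2 - Fp c K * hmm

lemma dvd_sub_mul {m : ℕ} {a b c d : PowerSeries ℤ}
    (h1 : (X:PowerSeries ℤ)^m ∣ a - b) (h2 : (X:PowerSeries ℤ)^m ∣ c - d) :
    (X:PowerSeries ℤ)^m ∣ a*c - b*d := by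
  have : a*c - b*d = (a-b)*c + b*(c-d) := by ring
  rw [this]
  exact dvd_add (h1.mul_right c) (h2.mul_left b)

lemma tail_one {m : ℕ} (s : Finset ℕ) (e : ℕ → ℤ) (he : ∀ j ∈ s, (m:ℤ) ≤ e j) :
    (X:PowerSeries ℤ)^m ∣ (∏ j ∈ s, (1 - mon (e j))) - 1 := by
  classical
  induction s using Finset.induction_on with
  | empty => simp
  | @insert a s' hx ih =>
    rw [Finset.prod_insert hx]
    have hdvd : (X:PowerSeries ℤ)^m ∣ mon (e a) := by
      rw [mon]
      exact pow_dvd_pow _ (by have := he a (Finset.mem_insert_self a s'); omega)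
    have hr : (1 - mon (e a)) * (∏ j ∈ s', (1 - mon (e j))) - 1
        = ((∏ j ∈ s', (1 - mon (e j))) - 1) - mon (e a) * (∏ j ∈ s', (1 - mon (e j))) := by
      ring
    rw [hr]
    exact dvd_sub (ih fun j hj => he j (Finset.mem_insert_of_mem hj)) (hdvd.mul_right _)

lemma Fp_sub {c r a : ℕ} (h : r ≤ a) :
    (X:PowerSeries ℤ)^(2*c*(r+1)) ∣ Fp c a - Fp c r := by
  have hsplit : Fp c a = Fp c r * ∏ j ∈ Ioc r a, (1 - mon (2*c*(j:ℤ))) := by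
    rw [Fp, Fp, Finset.prod_Ioc_consecutive _ (Nat.zero_le r) h]
  rw [hsplit, show Fp c r * ∏ j ∈ Ioc r a, (1 - mon (2*c*(j:ℤ))) - Fp c r
      = Fp c r * ((∏ j ∈ Ioc r a, (1 - mon (2*c*(j:ℤ)))) - 1) by ring]
  apply Dvd.dvd.mul_left
  apply tail_one
  intro j hj
  simp only [Finset.mem_Ioc] at hj
  push_cast
  have : (r:ℤ) + 1 ≤ j := by exact_mod_cast hj.1
  nlinarith [Nat.cast_nonneg (α := ℤ) c]

lemma isUnit_Fp (c m : ℕ) (hc : 0 < c) : IsUnit (Fp c m) := by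
  rw [PowerSeries.isUnit_iff_constantCoeff]
  have : constantCoeff (R := ℤ) (Fp c m) = 1 := by
    rw [Fp, map_prod]
    apply Finset.prod_eq_one
    intro j hj
    simp only [Finset.mem_Ioc] at hj
    have hz : constantCoeff (R := ℤ) (mon (2*c*(j:ℤ))) = 0 := by
      rw [mon, ← PowerSeries.coeff_zero_eq_constantCoeff_apply, PowerSeries.coeff_X_pow]
      have h1 : (1:ℤ) ≤ (j:ℤ) := by exact_mod_cast hj.1
      have h2 : (1:ℤ) ≤ (c:ℤ) := by exact_mod_cast hc
      have h3 : (1:ℤ) ≤ 2*(c:ℤ)*(j:ℤ) := by nlinarith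
      have h4 : (2*(c:ℤ)*(j:ℤ)).toNat ≠ 0 := by
        generalize hgen : 2*(c:ℤ)*(j:ℤ) = e at h3 ⊢
        omega
      simp [Ne.symm h4]
    rw [map_sub, map_one, hz, sub_zero]
  rw [this]
  exact isUnit_one

lemma dvd_of_dvd_mul_unit {m : ℕ} {a u : PowerSeries ℤ} (hu : IsUnit u)
    (h : (X:PowerSeries ℤ)^m ∣ a * u) : (X:PowerSeries ℤ)^m ∣ a := by
  obtain ⟨v, hv⟩ := hu.exists_right_inv
  have : a = a * u * v := by rw [mul_assoc, hv, mul_one]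
  rw [this]
  exact h.mul_right v

lemma qbz_Fp (c N : ℕ) (hc : 0 < c) {k : ℤ} (h0 : 0 ≤ k) (hk : k ≤ 2*N) :
    (X:PowerSeries ℤ)^(2*c*((N - ((N:ℤ)-k).natAbs)+1)) ∣ qbz c (2*N) k * Fp c N - 1 := by
  set s : ℕ := ((N:ℤ)-k).natAbs with hs
  set r : ℕ := N - s with hr
  have hsN : s ≤ N := by omega
  have hcq := cq c (2*N) k h0 (by push_cast; omega)
  set D := Fp c k.toNat * Fp c (((2*N:ℕ):ℤ) - k).toNat with hD
  have hrk : r ≤ k.toNat := by omega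
  have hrk2 : r ≤ (((2*N:ℕ):ℤ) - k).toNat := by omega
  have hrN : r ≤ N := by omega
  have hr2N : r ≤ 2*N := by omega
  have d1 : (X:PowerSeries ℤ)^(2*c*(r+1)) ∣ Fp c (2*N) * Fp c N - Fp c r * Fp c r :=
    dvd_sub_mul (Fp_sub hr2N) (Fp_sub hrN)
  have d2 : (X:PowerSeries ℤ)^(2*c*(r+1)) ∣ D - Fp c r * Fp c r :=
    dvd_sub_mul (Fp_sub hrk) (Fp_sub hrk2)
  have d3 : (X:PowerSeries ℤ)^(2*c*(r+1)) ∣ Fp c (2*N) * Fp c N - D := by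
    have h := dvd_sub d1 d2
    have heq : Fp c (2*N) * Fp c N - Fp c r * Fp c r - (D - Fp c r * Fp c r)
        = Fp c (2*N) * Fp c N - D := by ring
    rwa [heq] at h
  have key : (qbz c (2*N) k * Fp c N - 1) * D = Fp c (2*N) * Fp c N - D := by
    calc (qbz c (2*N) k * Fp c N - 1) * D
        = (qbz c (2*N) k * D) * Fp c N - D := by ring
      _ = _ := by rw [hcq]
  have hDu : IsUnit D := ((isUnit_Fp c _ hc).mul (isUnit_Fp c _ hc))
  exact dvd_of_dvd_mul_unit hDu (by rw [key]; exact d3)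

/-- Truncated theta function. -/
def Tg (c g : ℕ) : PowerSeries ℤ :=
  ∑ k ∈ Icc (0:ℤ) (2*(g:ℤ)), PowerSeries.C (R := ℤ) (eps ((g:ℤ)+k)) * mon (c*((g:ℤ)-k)^2)

lemma gauss (c N : ℕ) (hc : 0 < c) :
    (X:PowerSeries ℤ)^(c*(N+1)) ∣ Pg c N * Fp c N - Tg c N := by
  rw [star, Sg, Finset.sum_mul, Tg, ← Finset.sum_sub_distrib]
  apply Finset.dvd_sum
  intro k hk
  simp only [Finset.mem_Icc] at hk
  have hterm : term c N k * Fp c N - PowerSeries.C (R := ℤ) (eps ((N:ℤ)+k)) * mon (c*((N:ℤ)-k)^2)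
      = PowerSeries.C (R := ℤ) (eps ((N:ℤ)+k)) * mon (c*((N:ℤ)-k)^2)
        * (qbz c (2*N) k * Fp c N - 1) := by
    rw [term]; ring
  rw [hterm]
  rcases le_or_gt ((N:ℤ)+1) (((N:ℤ)-k)^2) with hbig | hsmall
  · have hdvd : (X:PowerSeries ℤ)^(c*(N+1)) ∣ mon (c*((N:ℤ)-k)^2) := by
      rw [mon]
      apply pow_dvd_pow
      have h2 : ((c*(N+1) : ℕ) : ℤ) ≤ (c:ℤ)*((N:ℤ)-k)^2 := by
        push_cast
        apply mul_le_mul_of_nonneg_left hbig (by positivity)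
      have h3 := Int.toNat_le_toNat h2
      rwa [Int.toNat_natCast] at h3
    exact (hdvd.mul_left _).mul_right _
  · set s : ℕ := ((N:ℤ)-k).natAbs with hs
    have hsq : ((s:ℤ))^2 = ((N:ℤ)-k)^2 := Int.natAbs_sq _
    have hsqN : ((s:ℤ))^2 ≤ (N:ℤ) := by rw [hsq]; omega
    have hsN : s ≤ N := by
      rcases Nat.eq_zero_or_pos s with h | h
      · omega
      · have h1 : (s:ℤ) ≤ ((s:ℤ))^2 := by nlinarith [Int.natCast_pos.mpr h]
        have : (s:ℤ) ≤ (N:ℤ) := le_trans h1 hsqN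
        exact_mod_cast this
    have hq := qbz_Fp c N hc hk.1 hk.2
    rw [← hs] at hq
    obtain ⟨D', hD'⟩ := hq
    rw [hD']
    have etoNat : ((c:ℤ)*((N:ℤ)-k)^2).toNat = c * s^2 := by
      have he : (c:ℤ)*((N:ℤ)-k)^2 = ((c*s^2 : ℕ) : ℤ) := by
        push_cast
        rw [hsq]
      rw [he, Int.toNat_natCast]
    have harr : PowerSeries.C (R := ℤ) (eps ((N:ℤ)+k)) * mon (c*((N:ℤ)-k)^2)
        * ((X:PowerSeries ℤ)^(2*c*((N - s)+1)) * D')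
        = (X:PowerSeries ℤ)^(c*s^2 + 2*c*((N-s)+1))
          * (PowerSeries.C (R := ℤ) (eps ((N:ℤ)+k)) * D') := by
      rw [mon, etoNat, pow_add]; ring
    rw [harr]
    apply Dvd.dvd.mul_right
    apply pow_dvd_pow
    have hfact : c*s^2 + 2*c*((N-s)+1) = c*(s^2 + 2*((N-s)+1)) := by ring
    rw [hfact]
    apply Nat.mul_le_mul_left
    zify [hsN]
    nlinarith [sq_nonneg ((s:ℤ) - 1)]

/-- Truncated `∏ (1 - X^j)`. -/
def Gp (m : ℕ) : PowerSeries ℤ := ∏ j ∈ Ioc 0 m, (1 - mon (j:ℤ))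

/-- Odd-exponent product. -/
def Og (c g : ℕ) : PowerSeries ℤ := ∏ t ∈ range g, (1 - mon (c*(2*(t:ℤ)+1)))

lemma Pg_eq_sq (c g : ℕ) : Pg c g = (Og c g)^2 := by
  rw [Pg, Og, ← Finset.prod_pow]

lemma split1 (N : ℕ) : Og 1 N * Fp 1 N = Gp (2*N) := by
  rw [Og, Fp, Gp]
  rw [← Finset.prod_filter_mul_prod_filter_not (Ioc 0 (2*N)) (fun j => Odd j)]
  congr 1
  · symm
    apply Finset.prod_nbij' (fun j => (j-1)/2) (fun t => 2*t+1)
    · intro a ha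
      simp only [Finset.mem_filter, Finset.mem_Ioc, Finset.mem_range] at ha ⊢
      obtain ⟨⟨h1, h2⟩, h3⟩ := ha
      obtain ⟨u, hu⟩ := h3
      omega
    · intro t ht
      simp only [Finset.mem_filter, Finset.mem_Ioc, Finset.mem_range] at ht ⊢
      exact ⟨⟨by omega, by omega⟩, ⟨t, by omega⟩⟩
    · intro a ha
      simp only [Finset.mem_filter, Finset.mem_Ioc] at ha
      obtain ⟨_, u, hu⟩ := ha
      omega
    · intro t _
      omega
    · intro a ha
      simp only [Finset.mem_filter, Finset.mem_Ioc] at ha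
      obtain ⟨⟨h1, _⟩, u, hu⟩ := ha
      have h2 : (a-1)/2 = u := by omega
      rw [h2]
      subst hu
      congr 1
      all_goals (push_cast; ring)
  · symm
    apply Finset.prod_nbij' (fun j => j/2) (fun t => 2*t)
    · intro a ha
      simp only [Finset.mem_filter, Finset.mem_Ioc] at ha ⊢
      rw [Nat.odd_iff] at ha
      omega
    · intro t ht
      simp only [Finset.mem_filter, Finset.mem_Ioc] at ht ⊢
      rw [Nat.odd_iff]
      omega
    · intro a ha
      simp only [Finset.mem_filter, Finset.mem_Ioc] at ha
      rw [Nat.odd_iff] at ha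
      omega
    · intro t _
      omega
    · intro a ha
      simp only [Finset.mem_filter, Finset.mem_Ioc] at ha
      rw [Nat.odd_iff] at ha
      obtain ⟨u, hu⟩ : ∃ u, a = 2*u := ⟨a/2, by omega⟩
      have h2 : a/2 = u := by omega
      rw [h2]
      subst hu
      congr 1
      all_goals (push_cast; ring)

lemma split2 (c N : ℕ) : Og (2*c) N * Fp (2*c) N = Fp c (2*N) := by
  rw [Og, Fp, Fp]
  rw [← Finset.prod_filter_mul_prod_filter_not (Ioc 0 (2*N)) (fun j => Odd j)]
  congr 1
  · symm
    apply Finset.prod_nbij' (fun j => (j-1)/2) (fun t => 2*t+1)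
    · intro a ha
      simp only [Finset.mem_filter, Finset.mem_Ioc, Finset.mem_range] at ha ⊢
      obtain ⟨⟨h1, h2⟩, u, hu⟩ := ha
      omega
    · intro t ht
      simp only [Finset.mem_filter, Finset.mem_Ioc, Finset.mem_range] at ht ⊢
      exact ⟨⟨by omega, by omega⟩, ⟨t, by omega⟩⟩
    · intro a ha
      simp only [Finset.mem_filter, Finset.mem_Ioc] at ha
      obtain ⟨_, u, hu⟩ := ha
      omega
    · intro t _
      omega
    · intro a ha
      simp only [Finset.mem_filter, Finset.mem_Ioc] at ha
      obtain ⟨⟨h1, _⟩, u, hu⟩ := ha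
      have h2 : (a-1)/2 = u := by omega
      rw [h2]
      subst hu
      congr 1
      all_goals (push_cast; ring)
  · symm
    apply Finset.prod_nbij' (fun j => j/2) (fun t => 2*t)
    · intro a ha
      simp only [Finset.mem_filter, Finset.mem_Ioc] at ha ⊢
      rw [Nat.odd_iff] at ha
      omega
    · intro t ht
      simp only [Finset.mem_filter, Finset.mem_Ioc] at ht ⊢
      rw [Nat.odd_iff]
      omega
    · intro a ha
      simp only [Finset.mem_filter, Finset.mem_Ioc] at ha
      rw [Nat.odd_iff] at ha
      omega
    · intro t _
      omega
    · intro a ha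
      simp only [Finset.mem_filter, Finset.mem_Ioc] at ha
      rw [Nat.odd_iff] at ha
      obtain ⟨u, hu⟩ : ∃ u, a = 2*u := ⟨a/2, by omega⟩
      have h2 : a/2 = u := by omega
      rw [h2]
      subst hu
      congr 1
      all_goals (push_cast; ring)

lemma Gp_sub {r a : ℕ} (h : r ≤ a) :
    (X:PowerSeries ℤ)^(r+1) ∣ Gp a - Gp r := by
  have hsplit : Gp a = Gp r * ∏ j ∈ Ioc r a, (1 - mon (j:ℤ)) := by
    rw [Gp, Gp, Finset.prod_Ioc_consecutive _ (Nat.zero_le r) h]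
  rw [hsplit, show Gp r * (∏ j ∈ Ioc r a, (1 - mon (j:ℤ))) - Gp r
      = Gp r * ((∏ j ∈ Ioc r a, (1 - mon (j:ℤ))) - 1) by ring]
  apply Dvd.dvd.mul_left
  apply tail_one
  intro j hj
  simp only [Finset.mem_Ioc] at hj
  exact_mod_cast hj.1

lemma coeff_term4 (n : ℕ) (x y z w : ℤ) :
    (PowerSeries.coeff (R := ℤ) n) ((PowerSeries.C (R := ℤ) (eps x) * mon (x^2))
        * (PowerSeries.C (R := ℤ) (eps y) * mon (y^2))
        * ((PowerSeries.C (R := ℤ) (eps z) * mon (2*z^2)) * (PowerSeries.C (R := ℤ) (eps w) * mon (2*w^2))))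
    = eps (x+y+z+w) * (if x^2+y^2+2*z^2+2*w^2 = (n:ℤ) then 1 else 0) := by
  have hmons : mon (x^2) * mon (y^2) * (mon (2*z^2) * mon (2*w^2))
      = mon (x^2+y^2+2*z^2+2*w^2) := by
    rw [← mon_add (by positivity) (by positivity), ← mon_add (by positivity) (by positivity),
      ← mon_add (by positivity) (by positivity)]
    ring_nf
  have heps : eps x * eps y * (eps z * eps w) = eps (x+y+z+w) := by
    rw [eps_add, eps_add, eps_add]
    ring
  have hre : (PowerSeries.C (R := ℤ) (eps x) * mon (x^2)) * (PowerSeries.C (R := ℤ) (eps y) * mon (y^2))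
        * ((PowerSeries.C (R := ℤ) (eps z) * mon (2*z^2)) * (PowerSeries.C (R := ℤ) (eps w) * mon (2*w^2)))
      = PowerSeries.C (R := ℤ) (eps (x+y+z+w)) * mon (x^2+y^2+2*z^2+2*w^2) := by
    rw [← hmons, ← heps, map_mul, map_mul, map_mul]
    ring
  rw [hre, PowerSeries.coeff_C_mul, mon, PowerSeries.coeff_X_pow]
  congr 1
  have hnn : (0:ℤ) ≤ x^2+y^2+2*z^2+2*w^2 := by positivity
  by_cases h : x^2+y^2+2*z^2+2*w^2 = (n:ℤ)
  · rw [if_pos h, if_pos (by omega)]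
  · rw [if_neg h, if_neg (by omega)]

lemma abs_le_of_sq_le' {t : ℤ} {n N : ℕ} (h : t^2 ≤ (n:ℤ)) (hn : n < N) :
    -(N:ℤ) ≤ t ∧ t ≤ (N:ℤ) := by
  have hN1 : (1:ℤ) ≤ (N:ℤ) := by exact_mod_cast Nat.one_le_iff_ne_zero.mpr (by omega)
  constructor
  · nlinarith [sq_nonneg (t + N)]
  · nlinarith [sq_nonneg (t - N)]

lemma odd_fact {x y z w : ℤ} {n : ℕ} (hn : n % 4 = 2)
    (h : x^2+y^2+2*z^2+2*w^2 = (n:ℤ)) : Odd (y+z+w) := by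
  have magic : ∀ a b c d : ZMod 8, (a^2+b^2+2*c^2+2*d^2 = 2 ∨ a^2+b^2+2*c^2+2*d^2 = 6)
      → ZMod.castHom (show (2:ℕ) ∣ 8 by norm_num) (ZMod 2) (b+c+d) = 1 := by decide
  have hn8 : n % 8 = 2 ∨ n % 8 = 6 := by omega
  have hcast : ((n:ℤ) : ZMod 8) = 2 ∨ ((n:ℤ) : ZMod 8) = 6 := by
    have : ((n:ℤ) : ZMod 8) = ((n % 8 : ℕ) : ZMod 8) := by
      push_cast
      rw [ZMod.natCast_mod]
    rcases hn8 with h8 | h8 <;> rw [this, h8]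
    · left; rfl
    · right; rfl
  have heq : ((x:ZMod 8))^2 + (y:ZMod 8)^2 + 2*(z:ZMod 8)^2 + 2*(w:ZMod 8)^2
      = ((n:ℤ) : ZMod 8) := by
    have := congrArg (fun t : ℤ => ((t : ZMod 8))) h
    push_cast at this
    simpa only [Int.cast_add, Int.cast_mul, Int.cast_pow, Int.cast_ofNat, Int.cast_natCast] using this
  have h2 : ZMod.castHom (show (2:ℕ) ∣ 8 by norm_num) (ZMod 2)
      ((y:ZMod 8)+(z:ZMod 8)+(w:ZMod 8)) = 1 := by
    apply magic (x:ZMod 8) (y:ZMod 8) (z:ZMod 8) (w:ZMod 8)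
    rcases hcast with hc | hc
    · left; rw [heq, hc]
    · right; rw [heq, hc]
  have h3 : ((y+z+w : ℤ) : ZMod 2) = 1 := by
    have hc8 : ((y+z+w : ℤ) : ZMod 8) = (y:ZMod 8)+(z:ZMod 8)+(w:ZMod 8) := by push_cast; ring
    calc ((y+z+w : ℤ) : ZMod 2)
        = ZMod.castHom (show (2:ℕ) ∣ 8 by norm_num) (ZMod 2) ((y+z+w : ℤ) : ZMod 8) :=
          (map_intCast _ _).symm
      _ = ZMod.castHom (show (2:ℕ) ∣ 8 by norm_num) (ZMod 2)
            ((y:ZMod 8)+(z:ZMod 8)+(w:ZMod 8)) := by rw [hc8]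
      _ = 1 := h2
  have h4 : ¬ ((2:ℤ) ∣ (y+z+w)) := by
    intro hdvd
    have hz : ((y+z+w : ℤ) : ZMod 2) = 0 :=
      (ZMod.intCast_zmod_eq_zero_iff_dvd _ 2).mpr (by exact_mod_cast hdvd)
    rw [h3] at hz
    exact one_ne_zero hz
  rcases Int.even_or_odd (y+z+w) with he | ho
  · obtain ⟨r, hr⟩ := he
    exact (h4 ⟨r, by omega⟩).elim
  · exact ho

/-- The sign-reversing involution (layout `p = ((w,z),(y,x))`). -/
def invo (n : ℕ) (p : (ℤ×ℤ)×(ℤ×ℤ)) : (ℤ×ℤ)×(ℤ×ℤ) :=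
  if p.2.2^2 + p.2.1^2 + 2*p.1.2^2 + 2*p.1.1^2 = (n:ℤ)
  then (((p.2.2-p.2.1)/2, (p.2.2+p.2.1)/2), (p.1.2-p.1.1, p.1.2+p.1.1))
  else p

lemma invo_apply (n : ℕ) (w z y x : ℤ) :
    invo n ((w,z),(y,x)) = if x^2 + y^2 + 2*z^2 + 2*w^2 = (n:ℤ)
      then (((x-y)/2, (x+y)/2), (z-w, z+w)) else ((w,z),(y,x)) := rfl

lemma even_xy {x y z w : ℤ} {n : ℕ} (hn : n % 4 = 2)
    (h : x^2+y^2+2*z^2+2*w^2 = (n:ℤ)) : (2:ℤ) ∣ (x + y) := by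
  obtain ⟨r1, hr1⟩ := odd_fact hn h
  obtain ⟨r2, hr2⟩ := odd_fact hn (show y^2+x^2+2*z^2+2*w^2 = (n:ℤ) by linarith)
  omega

set_option maxHeartbeats 1000000 in
lemma vanish (n N : ℕ) (hn : n % 4 = 2) (hnN : n < N) :
    (PowerSeries.coeff (R := ℤ) n)
      ((∑ s ∈ Icc (-(N:ℤ)) (N:ℤ), PowerSeries.C (R := ℤ) (eps s) * mon (s^2))^2
        * (∑ s ∈ Icc (-(N:ℤ)) (N:ℤ), PowerSeries.C (R := ℤ) (eps s) * mon (2*s^2))^2) = 0 := by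
  set I : Finset ℤ := Icc (-(N:ℤ)) (N:ℤ) with hI
  have hexp : (∑ s ∈ I, PowerSeries.C (R := ℤ) (eps s) * mon (s^2))^2
      * (∑ s ∈ I, PowerSeries.C (R := ℤ) (eps s) * mon (2*s^2))^2
      = ∑ w ∈ I, ∑ z ∈ I, ∑ y ∈ I, ∑ x ∈ I,
          (PowerSeries.C (R := ℤ) (eps x) * mon (x^2)) * (PowerSeries.C (R := ℤ) (eps y) * mon (y^2))
          * ((PowerSeries.C (R := ℤ) (eps z) * mon (2*z^2))
              * (PowerSeries.C (R := ℤ) (eps w) * mon (2*w^2))) := by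
    simp only [pow_two, Finset.sum_mul, Finset.mul_sum]
  rw [hexp]
  simp only [map_sum]
  rw [Finset.sum_congr rfl fun w _ => Finset.sum_congr rfl fun z _ =>
    Finset.sum_congr rfl fun y _ => Finset.sum_congr rfl fun x _ => coeff_term4 n x y z w]
  have hps : ∑ p ∈ (I ×ˢ I) ×ˢ (I ×ˢ I),
      (eps (p.2.2+p.2.1+p.1.2+p.1.1)
        * (if p.2.2^2+p.2.1^2+2*p.1.2^2+2*p.1.1^2 = (n:ℤ) then 1 else 0))
      = ∑ w ∈ I, ∑ z ∈ I, ∑ y ∈ I, ∑ x ∈ I,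
          eps (x+y+z+w) * (if x^2+y^2+2*z^2+2*w^2 = (n:ℤ) then 1 else 0) := by
    rw [Finset.sum_product, Finset.sum_product]
    refine Finset.sum_congr rfl fun w _ => Finset.sum_congr rfl fun z _ => ?_
    rw [Finset.sum_product]
  rw [← hps]
  have hmain : ∀ p ∈ (I ×ˢ I) ×ˢ (I ×ˢ I),
      (eps (p.2.2+p.2.1+p.1.2+p.1.1)
        * (if p.2.2^2+p.2.1^2+2*p.1.2^2+2*p.1.1^2 = (n:ℤ) then 1 else 0))
      + (eps ((invo n p).2.2+(invo n p).2.1+(invo n p).1.2+(invo n p).1.1)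
        * (if (invo n p).2.2^2+(invo n p).2.1^2+2*(invo n p).1.2^2+2*(invo n p).1.1^2 = (n:ℤ)
            then 1 else 0)) = 0
      ∧ invo n p ∈ (I ×ˢ I) ×ˢ (I ×ˢ I)
      ∧ invo n (invo n p) = p := by
    rintro ⟨⟨w, z⟩, y, x⟩ hp
    by_cases hc : x^2 + y^2 + 2*z^2 + 2*w^2 = (n:ℤ)
    · have h2 := even_xy hn hc
      obtain ⟨u, hu⟩ : ∃ u, x + y = 2*u := h2
      obtain ⟨v, hv⟩ : ∃ v, x - y = 2*v := ⟨(x-y)/2, by omega⟩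
      have hinvo : invo n ((w,z),(y,x)) = ((v, u), (z-w, z+w)) := by
        rw [invo_apply, if_pos hc]
        have e1 : (x-y)/2 = v := by omega
        have e2 : (x+y)/2 = u := by omega
        rw [e1, e2]
      have hx : x = u + v := by omega
      have hy : y = u - v := by omega
      have himg : (z+w)^2 + (z-w)^2 + 2*u^2 + 2*v^2 = (n:ℤ) := by
        rw [hx, hy] at hc
        linear_combination hc
      have hinvo2 : invo n ((v, u), (z-w, z+w)) = ((w,z),(y,x)) := by
        rw [invo_apply, if_pos himg]
        have e1 : ((z+w)-(z-w))/2 = w := by omega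
        have e2 : ((z+w)+(z-w))/2 = z := by omega
        rw [e1, e2, ← hx, ← hy]
      refine ⟨?_, ?_, by rw [hinvo, hinvo2]⟩
      · -- signs
        rw [hinvo]
        show eps (x+y+z+w) * (if x^2+y^2+2*z^2+2*w^2 = (n:ℤ) then 1 else 0)
          + eps ((z+w)+(z-w)+u+v)
            * (if (z+w)^2+(z-w)^2+2*u^2+2*v^2 = (n:ℤ) then 1 else 0) = 0
        rw [if_pos hc, if_pos himg]
        have hodd := odd_fact hn hc
        have e1 : eps (x+y+z+w) = eps x * eps (y+z+w) := by
          rw [← eps_add]; ring_nf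
        have e2 : eps (z+w+(z-w)+u+v) = eps x := by
          rw [show z+w+(z-w)+u+v = x + (z+z) by omega, eps_add, eps_even ⟨z, rfl⟩, mul_one]
        rw [e1, e2, eps_odd hodd]
        ring
      · -- membership
        rw [hinvo]
        simp only [Finset.mem_product, Finset.mem_Icc, hI] at hp ⊢
        have hzw1 : (z+w)^2 ≤ (n:ℤ) := by nlinarith [sq_nonneg (z-w), sq_nonneg x, sq_nonneg y]
        have hzw2 : (z-w)^2 ≤ (n:ℤ) := by nlinarith [sq_nonneg (z+w), sq_nonneg x, sq_nonneg y]
        have hu2 : u^2 ≤ (n:ℤ) := by nlinarith [sq_nonneg (x-y), sq_nonneg z, sq_nonneg w]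
        have hv2 : v^2 ≤ (n:ℤ) := by nlinarith [sq_nonneg (x+y), sq_nonneg z, sq_nonneg w]
        exact ⟨⟨abs_le_of_sq_le' hv2 hnN, abs_le_of_sq_le' hu2 hnN⟩,
          abs_le_of_sq_le' hzw2 hnN, abs_le_of_sq_le' hzw1 hnN⟩
    · have hninvo : invo n ((w,z),(y,x)) = ((w,z),(y,x)) := by
        rw [invo_apply, if_neg hc]
      refine ⟨?_, by rw [hninvo]; exact hp, by rw [hninvo, hninvo]⟩
      rw [hninvo]
      show eps (x+y+z+w) * (if x^2+y^2+2*z^2+2*w^2 = (n:ℤ) then 1 else 0)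
        + eps (x+y+z+w) * (if x^2+y^2+2*z^2+2*w^2 = (n:ℤ) then 1 else 0) = 0
      rw [if_neg hc]
      ring
  refine Finset.sum_involution (fun p _ => invo n p) ?_ ?_ ?_ ?_
  · intro p hp
    exact (hmain p hp).1
  · intro p hp hne heq
    have heq' : invo n p = p := heq
    have h1 := (hmain p hp).1
    rw [heq'] at h1
    apply hne
    linarith
  · intro p hp
    exact (hmain p hp).2.1
  · intro p hp
    exact (hmain p hp).2.2


lemma mon_natCast (m : ℕ) : mon ((m:ℕ):ℤ) = PowerSeries.X ^ m := by
  rw [mon, Int.toNat_natCast]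

lemma dvd_sub_pow {m : ℕ} {a b : PowerSeries ℤ} (h : (X:PowerSeries ℤ)^m ∣ a - b) :
    ∀ k : ℕ, (X:PowerSeries ℤ)^m ∣ a^k - b^k := by
  intro k
  induction k with
  | zero => simp
  | succ k ih =>
    have := dvd_sub_mul h ih
    rwa [← pow_succ', ← pow_succ'] at this

lemma dvd_sub_trans {m : ℕ} {a b c : PowerSeries ℤ}
    (h1 : (X:PowerSeries ℤ)^m ∣ a - b) (h2 : (X:PowerSeries ℤ)^m ∣ b - c) :
    (X:PowerSeries ℤ)^m ∣ a - c := by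
  have := dvd_add h1 h2
  rwa [sub_add_sub_cancel] at this

lemma dvd_sub_symm {m : ℕ} {a b : PowerSeries ℤ}
    (h : (X:PowerSeries ℤ)^m ∣ a - b) : (X:PowerSeries ℤ)^m ∣ b - a := by
  have := h.neg_right
  rwa [neg_sub] at this

lemma Tg_eq (c N : ℕ) : Tg c N
    = ∑ s ∈ Icc (-(N:ℤ)) (N:ℤ), PowerSeries.C (R := ℤ) (eps s) * mon ((c:ℤ)*s^2) := by
  rw [Tg]
  apply Finset.sum_nbij' (fun k => (N:ℤ) - k) (fun s => (N:ℤ) - s)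
  · intro a ha
    simp only [Finset.mem_Icc] at ha ⊢
    omega
  · intro s hs
    simp only [Finset.mem_Icc] at hs ⊢
    omega
  · intro a _
    ring
  · intro s _
    ring
  · intro a _
    have h1 : eps ((N:ℤ)+a) = eps ((N:ℤ)-a) := by
      rw [show (N:ℤ)+a = ((N:ℤ)-a) + 2*a by ring, eps_add, eps_even ⟨a, two_mul a⟩, mul_one]
    rw [h1]

theorem final_stmt8 (n : ℕ) (hn : n % 4 = 2) (F : PowerSeries ℤ)
    (hF : F * ∏ j ∈ Finset.Icc 1 (n + 1), (1 - PowerSeries.X ^ (4 * j)) ^ 2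
        = ∏ j ∈ Finset.Icc 1 (n + 1),
            (1 - PowerSeries.X ^ j) ^ 4 * (1 - PowerSeries.X ^ (2 * j)) ^ 2) :
    PowerSeries.coeff (R := ℤ) n F = 0 := by
  set N : ℕ := n + 1 with hN
  have hIccIoc : Finset.Icc 1 N = Finset.Ioc 0 N := by
    ext j
    simp only [Finset.mem_Icc, Finset.mem_Ioc]
    omega
  have hA : (∏ j ∈ Finset.Icc 1 N, (1 - PowerSeries.X ^ j)) = Gp N := by
    rw [hIccIoc, Gp]
    exact Finset.prod_congr rfl fun j _ => by rw [mon_natCast]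
  have hB : (∏ j ∈ Finset.Icc 1 N, (1 - PowerSeries.X ^ (2*j))) = Fp 1 N := by
    rw [hIccIoc, Fp]
    refine Finset.prod_congr rfl fun j _ => ?_
    rw [show (2*(1:ℕ):ℤ)*(j:ℤ) = ((2*j : ℕ) : ℤ) by push_cast; ring, mon_natCast]
  have hC : (∏ j ∈ Finset.Icc 1 N, (1 - PowerSeries.X ^ (4*j))) = Fp 2 N := by
    rw [hIccIoc, Fp]
    refine Finset.prod_congr rfl fun j _ => ?_
    rw [show (2*(2:ℕ):ℤ)*(j:ℤ) = ((4*j : ℕ) : ℤ) by push_cast; ring, mon_natCast]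
  have hF' : F * (Fp 2 N)^2 = (Gp N)^4 * (Fp 1 N)^2 := by
    rw [← hA, ← hB, ← hC, ← Finset.prod_pow, ← Finset.prod_pow, ← Finset.prod_pow,
      ← Finset.prod_mul_distrib]
    exact hF
  set t : ℕ := N + 1 with ht
  -- basic congruences
  have d_A : (X:PowerSeries ℤ)^t ∣ Gp N - Og 1 N * Fp 1 N := by
    rw [split1]
    exact dvd_sub_symm (Gp_sub (by omega))
  have d_B : (X:PowerSeries ℤ)^t ∣ Fp 1 N - Og 2 N * Fp 2 N := by
    have h2 := split2 1 N
    rw [show 2*1 = 2 from rfl] at h2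
    rw [h2]
    exact dvd_sub_symm ((pow_dvd_pow (X:PowerSeries ℤ) (by omega)).trans (Fp_sub (by omega)))
  have dG1 : (X:PowerSeries ℤ)^t ∣ (Og 1 N)^2 * Fp 1 N - Tg 1 N := by
    have := gauss 1 N (by norm_num)
    rw [Pg_eq_sq] at this
    exact (pow_dvd_pow (X:PowerSeries ℤ) (by omega)).trans this
  have dG2 : (X:PowerSeries ℤ)^t ∣ (Og 2 N)^2 * Fp 2 N - Tg 2 N := by
    have := gauss 2 N (by norm_num)
    rw [Pg_eq_sq] at this
    exact (pow_dvd_pow (X:PowerSeries ℤ) (by omega)).trans this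
  have dtriv : ∀ a : PowerSeries ℤ, (X:PowerSeries ℤ)^t ∣ a - a := by
    intro a
    simp
  -- left side
  have h_left : (X:PowerSeries ℤ)^t ∣ (Gp N)^4 * (Fp 1 N)^2 - (Og 1 N)^4 * (Fp 1 N)^6 := by
    have h1 := dvd_sub_mul (dvd_sub_pow d_A 4) (dtriv ((Fp 1 N)^2))
    have he : (Og 1 N * Fp 1 N)^4 * (Fp 1 N)^2 = (Og 1 N)^4 * (Fp 1 N)^6 := by ring
    rwa [he] at h1
  -- right side
  have h_right : (X:PowerSeries ℤ)^t
      ∣ (Tg 1 N)^2 * (Tg 2 N)^2 * (Fp 2 N)^2 - (Og 1 N)^4 * (Fp 1 N)^6 := by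
    have e1 := dvd_sub_pow (dvd_sub_symm dG1) 2
    have e2 := dvd_sub_pow (dvd_sub_symm dG2) 2
    have e12 := dvd_sub_mul (dvd_sub_mul e1 e2) (dtriv ((Fp 2 N)^2))
    have mid : ((Og 1 N)^2 * Fp 1 N)^2 * ((Og 2 N)^2 * Fp 2 N)^2 * (Fp 2 N)^2
        = (Og 1 N)^4 * (Fp 1 N)^2 * (Og 2 N * Fp 2 N)^4 := by ring
    rw [mid] at e12
    have e3 := dvd_sub_mul (dtriv ((Og 1 N)^4 * (Fp 1 N)^2))
      (dvd_sub_pow (dvd_sub_symm d_B) 4)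
    have he : (Og 1 N)^4 * (Fp 1 N)^2 * (Fp 1 N)^4 = (Og 1 N)^4 * (Fp 1 N)^6 := by ring
    rw [he] at e3
    exact dvd_sub_trans e12 e3
  have hmain : (X:PowerSeries ℤ)^t
      ∣ (Gp N)^4 * (Fp 1 N)^2 - (Tg 1 N)^2 * (Tg 2 N)^2 * (Fp 2 N)^2 :=
    dvd_sub_trans h_left (dvd_sub_symm h_right)
  -- cancel the unit
  have hdiff : (X:PowerSeries ℤ)^t ∣ (F - (Tg 1 N)^2 * (Tg 2 N)^2) * (Fp 2 N)^2 := by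
    have he : (F - (Tg 1 N)^2 * (Tg 2 N)^2) * (Fp 2 N)^2
        = F * (Fp 2 N)^2 - (Tg 1 N)^2 * (Tg 2 N)^2 * (Fp 2 N)^2 := by ring
    rw [he, hF']
    exact hmain
  have hcancel : (X:PowerSeries ℤ)^t ∣ F - (Tg 1 N)^2 * (Tg 2 N)^2 :=
    dvd_of_dvd_mul_unit ((isUnit_Fp 2 N (by norm_num)).pow 2) hdiff
  have hco : PowerSeries.coeff (R := ℤ) n (F - (Tg 1 N)^2 * (Tg 2 N)^2) = 0 :=
    PowerSeries.X_pow_dvd_iff.mp hcancel n (by omega)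
  rw [map_sub, sub_eq_zero] at hco
  rw [hco]
  -- rewrite the theta sums and apply the involution
  have hT1 : Tg 1 N = ∑ s ∈ Icc (-(N:ℤ)) (N:ℤ), PowerSeries.C (R := ℤ) (eps s) * mon (s^2) := by
    rw [Tg_eq]
    refine Finset.sum_congr rfl fun s _ => ?_
    congr 2
    push_cast
    ring
  have hT2 : Tg 2 N = ∑ s ∈ Icc (-(N:ℤ)) (N:ℤ), PowerSeries.C (R := ℤ) (eps s) * mon (2*s^2) := by
    rw [Tg_eq]
    refine Finset.sum_congr rfl fun s _ => ?_
    congr 2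
    all_goals (push_cast; ring)
  rw [hT1, hT2]
  exact vanish n N hn (by omega)

end

end Stmt8

/-- For `n ≡ 2 (mod 4)`, the `n`-th coefficient of
`∏_{j≥1} (1-q^j)^4 (1-q^{2j})^2 / (1-q^{4j})^2` vanishes. -/
theorem stmt8 (n : ℕ) (hn : n % 4 = 2) (F : PowerSeries ℤ)
    (hF : F * ∏ j ∈ Finset.Icc 1 (n + 1), (1 - PowerSeries.X ^ (4 * j)) ^ 2
        = ∏ j ∈ Finset.Icc 1 (n + 1),
            (1 - PowerSeries.X ^ j) ^ 4 * (1 - PowerSeries.X ^ (2 * j)) ^ 2) :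
    PowerSeries.coeff (R := ℤ) n F = 0 :=
  Stmt8.final_stmt8 n hn F hF
end

section
/- The sequence of signs of the coefficients C(n) of ∏_{j≥1}(1-q^j)^4 (1-q^{2j})^2 / (1-q^{4j})^2 satisfies: sgn C(n) = 1 if n ≡ 0, 3, 7 (mod 8); sgn C(n) = -1 if n ≡ 1, 4, 5 (mod 8); and C(n) = 0 if n ≡ 2 (mod 4). Moreover, C(n) = -4(-4/n)σ(n) for odd n, where (-4/n) is the Kronecker symbol. -/
private lemma sig_pos' (f : ℕ → ℤ) (hf : ∀ k, f k = ∑ d ∈ k.divisors, (d : ℤ))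
    (k : ℕ) (hk : 1 ≤ k) : 1 ≤ f k := by
  rw [hf]
  calc (1:ℤ) = ((1:ℕ):ℤ) := by norm_num
  _ ≤ ∑ d ∈ k.divisors, (d : ℤ) := Finset.single_le_sum (f := fun d : ℕ => (d:ℤ))
      (fun d _ => Int.ofNat_nonneg d) (Nat.one_mem_divisors.2 (by omega))

private lemma sig_four' (f : ℕ → ℤ) (hf : ∀ k, f k = ∑ d ∈ k.divisors, (d : ℤ))
    (k : ℕ) (hk : 1 ≤ k) : 4 * f k + 1 ≤ f (4*k) := by
  rw [hf, hf]
  set S : Finset ℕ := (k.divisors.image (fun d : ℕ => 4*d)) ∪ {1} with hS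
  have hsub : S ⊆ (4*k).divisors := by
    intro x hx
    rcases Finset.mem_union.1 hx with hx | hx
    · obtain ⟨d, hd, rfl⟩ := Finset.mem_image.1 hx
      rw [Nat.mem_divisors] at hd ⊢
      exact ⟨mul_dvd_mul_left 4 hd.1, by omega⟩
    · simp only [Finset.mem_singleton] at hx
      subst hx; exact Nat.one_mem_divisors.2 (by omega)
  have h1 : 4 * (∑ d ∈ k.divisors, (d:ℤ)) + 1 = ∑ x ∈ S, (x:ℤ) := by
    rw [hS, Finset.sum_union, Finset.sum_image, Finset.sum_singleton, Finset.mul_sum]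
    · push_cast; ring_nf
    · intro a _ b _ h; simp only at h; omega
    · simp only [Finset.disjoint_singleton_right, Finset.mem_image]
      rintro ⟨d, hd, h1⟩
      have := Nat.pos_of_mem_divisors hd
      omega
  have h2 : ∑ x ∈ S, (x:ℤ) ≤ ∑ d ∈ (4*k).divisors, (d:ℤ) :=
    Finset.sum_le_sum_of_subset_of_nonneg hsub (fun d _ _ => Int.ofNat_nonneg d)
  omega

private lemma jac_odd' (n : ℕ) (h : Odd n) : jacobiSym (-4) n = ZMod.χ₄ n := by
  have h2 : (-4 : ℤ) = -1 * 2^2 := by norm_num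
  have hg : (2:ℤ).gcd n = 1 := by
    have : Nat.Coprime 2 n := Nat.coprime_two_left.2 h
    simpa [Int.gcd] using this
  rw [h2, jacobiSym.mul_left, jacobiSym.sq_one' hg, jacobiSym.at_neg_one h, mul_one]

private lemma jac_even' (n : ℕ) (hn : n ≠ 0) (h : 2 ∣ n) : jacobiSym (-4) n = 0 := by
  have : NeZero n := ⟨hn⟩
  rw [jacobiSym.eq_zero_iff_not_coprime]
  intro hg
  have : (2:ℤ) ∣ (Int.gcd (-4) n : ℤ) :=
    Int.dvd_coe_gcd (by norm_num) (by exact_mod_cast Int.ofNat_dvd.2 h)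
  omega

/-- Assuming the Fourier expansion
`∏(1-q^j)^4(1-q^{2j})^2(1-q^{4j})^{-2} = 1 - 4∑(-4/n)σ(n)q^n + 8∑(-1)^n σ(n)q^{4n}
 - 32∑σ(n)q^{16n}`, the coefficients `C(n)` satisfy: `sgn C(n) = 1` for
`n ≡ 0,3,7 (mod 8)`, `sgn C(n) = -1` for `n ≡ 1,4,5 (mod 8)`, `C(n) = 0` for
`n ≡ 2 (mod 4)`, and `C(n) = -4(-4/n)σ(n)` for odd `n`. -/
theorem stmt10 (C : ℕ → ℤ) (σ : ℕ → ℤ)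
    (hσ : ∀ k, σ k = ∑ d ∈ k.divisors, (d : ℤ))
    (hC : ∀ n, C n = (if n = 0 then 1 else 0)
        - 4 * jacobiSym (-4) n * σ n
        + 8 * (if 4 ∣ n then (-1) ^ (n / 4) * σ (n / 4) else 0)
        - 32 * (if 16 ∣ n then σ (n / 16) else 0)) :
    ∀ n, 1 ≤ n →
      ((n % 8 = 0 ∨ n % 8 = 3 ∨ n % 8 = 7) → Int.sign (C n) = 1) ∧
      ((n % 8 = 1 ∨ n % 8 = 4 ∨ n % 8 = 5) → Int.sign (C n) = -1) ∧
      (n % 4 = 2 → C n = 0) ∧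
      (Odd n → C n = -4 * jacobiSym (-4) n * σ n) := by
  intro n hn
  have hC' := hC n
  rw [if_neg (by omega)] at hC'
  by_cases hodd : Odd n
  · have h4 : ¬ (4 ∣ n) := by rcases hodd with ⟨m, rfl⟩; omega
    have h16 : ¬ (16 ∣ n) := by rcases hodd with ⟨m, rfl⟩; omega
    rw [if_neg h4, if_neg h16] at hC'
    have hj : jacobiSym (-4) n = ZMod.χ₄ n := jac_odd' n hodd
    have hχ := ZMod.χ₄_nat_eq_if_mod_four n
    have hn2 : n % 2 = 1 := Nat.odd_iff.1 hodd
    have hsp : 1 ≤ σ n := sig_pos' σ hσ n hn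
    refine ⟨?_, ?_, ?_, fun _ => by rw [hC']; ring⟩
    · rintro (h | h | h) <;> [omega; skip; skip] <;>
      · rw [if_neg (by omega), if_neg (by omega)] at hχ
        rw [hC', hj, hχ]
        have : 0 < (0:ℤ) - 4 * (-1) * σ n + 8 * 0 - 32 * 0 := by linarith
        simpa using Int.sign_eq_one_of_pos this
    · rintro (h | h | h) <;> [skip; omega; skip] <;>
      · rw [if_neg (by omega), if_pos (by omega)] at hχ
        rw [hC', hj, hχ]
        have : (0:ℤ) - 4 * 1 * σ n + 8 * 0 - 32 * 0 < 0 := by linarith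
        simpa using Int.sign_eq_neg_one_of_neg this
    · intro h; omega
  · have h2 : 2 ∣ n := (Nat.not_odd_iff_even.1 hodd).two_dvd
    have hj : jacobiSym (-4) n = 0 := jac_even' n (by omega) h2
    rw [hj] at hC'
    simp only [mul_zero, zero_mul, zero_sub, neg_zero] at hC'
    refine ⟨?_, ?_, ?_, fun h => absurd h hodd⟩
    · rintro (h | h | h)
      · have h4 : 4 ∣ n := by omega
        have hq : Even (n/4) := Nat.even_iff.2 (by omega)
        have hpow : ((-1:ℤ)) ^ (n/4) = 1 := hq.neg_one_pow
        rw [if_pos h4, hpow, one_mul] at hC'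
        have hsp : 1 ≤ σ (n/4) := sig_pos' σ hσ (n/4) (by omega)
        by_cases h16 : 16 ∣ n
        · rw [if_pos h16] at hC'
          have hkey : 4 * σ (n/16) + 1 ≤ σ (n/4) := by
            have he : n / 4 = 4 * (n/16) := by omega
            rw [he]; exact sig_four' σ hσ (n/16) (by omega)
          have hsp16 : 1 ≤ σ (n/16) := sig_pos' σ hσ (n/16) (by omega)
          have : 0 < C n := by rw [hC']; linarith
          exact Int.sign_eq_one_of_pos this
        · rw [if_neg h16] at hC'
          have : 0 < C n := by rw [hC']; linarith
          exact Int.sign_eq_one_of_pos this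
      all_goals omega
    · rintro (h | h | h)
      · omega
      · have h4 : 4 ∣ n := by omega
        have h16 : ¬ (16 ∣ n) := by omega
        have hq : Odd (n/4) := Nat.odd_iff.2 (by omega)
        have hpow : ((-1:ℤ)) ^ (n/4) = -1 := hq.neg_one_pow
        rw [if_pos h4, if_neg h16, hpow] at hC'
        have hsp : 1 ≤ σ (n/4) := sig_pos' σ hσ (n/4) (by omega)
        have : C n < 0 := by rw [hC']; linarith
        exact Int.sign_eq_neg_one_of_neg this
      · omega
    · intro h
      have h4 : ¬ (4 ∣ n) := by omega
      have h16 : ¬ (16 ∣ n) := by omega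
      rw [if_neg h4, if_neg h16] at hC'
      rw [hC']; ring
end

section
/- For every positive integer n, the number of integer quadruples (a,b,c,d) with a^2 + b^2 + 2c^2 + 2d^2 = n is strictly positive; consequently the number of integer 5-tuples (a,b,c,d,e) with a^2 + b^2 + 2c^2 + 2d^2 + 2e^2 = n is strictly positive. -/
lemma pair_sq (x y : ℤ) (h : Even (x + y)) :
    ∃ u v : ℤ, 2 * u ^ 2 + 2 * v ^ 2 = x ^ 2 + y ^ 2 := by
  obtain ⟨u, hu⟩ := h
  have hx : x = 2 * u - y := by linarith
  subst hx
  exact ⟨u, u - y, by ring⟩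

lemma repr4 (n : ℕ) : ∃ a b c d : ℤ,
    a ^ 2 + b ^ 2 + 2 * c ^ 2 + 2 * d ^ 2 = (n : ℤ) := by
  obtain ⟨a, b, c, d, h⟩ := Nat.sum_four_squares n
  have h' : (a : ℤ) ^ 2 + (b : ℤ) ^ 2 + (c : ℤ) ^ 2 + (d : ℤ) ^ 2 = n := by
    exact_mod_cast h
  set A := (a : ℤ); set B := (b : ℤ); set C := (c : ℤ); set D := (d : ℤ)
  rcases Int.even_or_odd A with ha | ha <;> rcases Int.even_or_odd B with hb | hb <;>
    rcases Int.even_or_odd C with hc | hc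
  · obtain ⟨u, v, huv⟩ := pair_sq A B (ha.add hb); exact ⟨C, D, u, v, by linarith⟩
  · obtain ⟨u, v, huv⟩ := pair_sq A B (ha.add hb); exact ⟨C, D, u, v, by linarith⟩
  · obtain ⟨u, v, huv⟩ := pair_sq A C (ha.add hc); exact ⟨B, D, u, v, by linarith⟩
  · obtain ⟨u, v, huv⟩ := pair_sq B C (hb.add_odd hc); exact ⟨A, D, u, v, by linarith⟩
  · obtain ⟨u, v, huv⟩ := pair_sq B C (hb.add hc); exact ⟨A, D, u, v, by linarith⟩
  · obtain ⟨u, v, huv⟩ := pair_sq A C (ha.add_odd hc); exact ⟨B, D, u, v, by linarith⟩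
  · obtain ⟨u, v, huv⟩ := pair_sq A B (ha.add_odd hb); exact ⟨C, D, u, v, by linarith⟩
  · obtain ⟨u, v, huv⟩ := pair_sq A B (ha.add_odd hb); exact ⟨C, D, u, v, by linarith⟩

lemma sq_bound {a : ℤ} {n : ℕ} (h : a ^ 2 ≤ (n : ℤ)) : -(n : ℤ) ≤ a ∧ a ≤ n := by
  have hn : (n : ℤ) ≤ (n : ℤ) ^ 2 := by exact_mod_cast Nat.le_self_pow two_ne_zero n
  exact abs_le_of_sq_le_sq' (le_trans h hn) (by positivity)

/-- Every positive integer is represented by `a² + b² + 2c² + 2d²` (Liouville), and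
consequently by `a² + b² + 2c² + 2d² + 2e²`. -/
theorem stmt11 (n : ℕ) (hn : 0 < n) :
    0 < Set.ncard {x : ℤ × ℤ × ℤ × ℤ |
        x.1 ^ 2 + x.2.1 ^ 2 + 2 * x.2.2.1 ^ 2 + 2 * x.2.2.2 ^ 2 = n} ∧
      0 < Set.ncard {x : ℤ × ℤ × ℤ × ℤ × ℤ |
        x.1 ^ 2 + x.2.1 ^ 2 + 2 * x.2.2.1 ^ 2 + 2 * x.2.2.2.1 ^ 2
          + 2 * x.2.2.2.2 ^ 2 = n} := by
  obtain ⟨a, b, c, d, habcd⟩ := repr4 n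
  set I : Set ℤ := Set.Icc (-(n : ℤ)) n with hI
  have hIfin : I.Finite := Set.finite_Icc _ _
  constructor
  · have hfin : {x : ℤ × ℤ × ℤ × ℤ |
        x.1 ^ 2 + x.2.1 ^ 2 + 2 * x.2.2.1 ^ 2 + 2 * x.2.2.2 ^ 2 = n}.Finite := by
      apply Set.Finite.subset (hIfin.prod (hIfin.prod (hIfin.prod hIfin)))
      rintro ⟨p, q, r, s⟩ hx
      simp only [Set.mem_setOf_eq] at hx
      have h1 := sq_bound (n := n) (a := p) (by nlinarith [sq_nonneg q, sq_nonneg r, sq_nonneg s])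
      have h2 := sq_bound (n := n) (a := q) (by nlinarith [sq_nonneg p, sq_nonneg r, sq_nonneg s])
      have h3 := sq_bound (n := n) (a := r) (by nlinarith [sq_nonneg q, sq_nonneg p, sq_nonneg s])
      have h4 := sq_bound (n := n) (a := s) (by nlinarith [sq_nonneg q, sq_nonneg r, sq_nonneg p])
      simp [Set.mem_prod, hI, Set.mem_Icc, h1.1, h1.2, h2.1, h2.2, h3.1, h3.2, h4.1, h4.2]
    rw [Set.ncard_pos hfin]
    exact ⟨(a, b, c, d), habcd⟩
  · have hfin : {x : ℤ × ℤ × ℤ × ℤ × ℤ |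
        x.1 ^ 2 + x.2.1 ^ 2 + 2 * x.2.2.1 ^ 2 + 2 * x.2.2.2.1 ^ 2
          + 2 * x.2.2.2.2 ^ 2 = n}.Finite := by
      apply Set.Finite.subset (hIfin.prod (hIfin.prod (hIfin.prod (hIfin.prod hIfin))))
      rintro ⟨p, q, r, s, t⟩ hx
      simp only [Set.mem_setOf_eq] at hx
      have h1 := sq_bound (n := n) (a := p)
        (by nlinarith [sq_nonneg q, sq_nonneg r, sq_nonneg s, sq_nonneg t])
      have h2 := sq_bound (n := n) (a := q)
        (by nlinarith [sq_nonneg p, sq_nonneg r, sq_nonneg s, sq_nonneg t])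
      have h3 := sq_bound (n := n) (a := r)
        (by nlinarith [sq_nonneg q, sq_nonneg p, sq_nonneg s, sq_nonneg t])
      have h4 := sq_bound (n := n) (a := s)
        (by nlinarith [sq_nonneg q, sq_nonneg r, sq_nonneg p, sq_nonneg t])
      have h5 := sq_bound (n := n) (a := t)
        (by nlinarith [sq_nonneg q, sq_nonneg r, sq_nonneg s, sq_nonneg p])
      simp [Set.mem_prod, hI, Set.mem_Icc, h1.1, h1.2, h2.1, h2.2, h3.1, h3.2, h4.1, h4.2,
        h5.1, h5.2]
    rw [Set.ncard_pos hfin]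
    exact ⟨(a, b, c, d, 0), by simpa using habcd⟩
end

section
/- Let p be an odd prime, k a positive integer, and n = p^a · m with a ≥ 0 and p ∤ m. Then the sign of ∑_{d | n} (d/p) · d^k equals the Legendre symbol (m/p), where (d/p) is the Legendre symbol. -/
open Finset ArithmeticFunction
open scoped ArithmeticFunction.zeta

private lemma abs_geom_le (r : ℤ) (hr : 2 ≤ |r|) (n : ℕ) :
    |∑ i ∈ range n, r ^ i| ≤ |r| ^ n - 1 := by
  induction n with
  | zero => simp
  | succ n ih =>
    rw [Finset.sum_range_succ]
    calc |∑ i ∈ range n, r ^ i + r ^ n| ≤ |∑ i ∈ range n, r ^ i| + |r ^ n| := abs_add_le _ _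
      _ ≤ (|r| ^ n - 1) + |r| ^ n := by rw [abs_pow]; linarith
      _ ≤ |r| ^ (n + 1) - 1 := by
          rw [pow_succ]
          nlinarith [pow_pos (lt_of_lt_of_le (by norm_num) hr) n]

private lemma sign_add_of_abs_lt {x y : ℤ} (h : |x| < |y|) :
    Int.sign (x + y) = Int.sign y := by
  obtain ⟨h1, h2⟩ := abs_lt.mp h
  rcases lt_trichotomy y 0 with hy | hy | hy
  · rw [abs_of_neg hy] at h1 h2
    rw [Int.sign_eq_neg_one_of_neg hy, Int.sign_eq_neg_one_of_neg (by linarith)]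
  · rw [hy, abs_zero] at h
    exact absurd h (abs_nonneg x).not_gt
  · rw [abs_of_pos hy] at h1 h2
    rw [Int.sign_eq_one_of_pos hy, Int.sign_eq_one_of_pos (by linarith)]

private lemma sign_geom_sum (r : ℤ) (hr : 2 ≤ |r|) (n : ℕ) :
    Int.sign (∑ i ∈ range (n + 1), r ^ i) = Int.sign (r ^ n) := by
  rw [Finset.sum_range_succ]
  refine sign_add_of_abs_lt ?_
  calc |∑ i ∈ range n, r ^ i| ≤ |r| ^ n - 1 := abs_geom_le r hr n
    _ < |r| ^ n := by linarith
    _ = |r ^ n| := (abs_pow r n).symm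

/-- For an odd prime `p`, `k ≥ 1`, and `n = p^a m` with `p ∤ m`, the sign of
`∑_{d ∣ n} (d/p) d^k` equals the Legendre symbol `(m/p)`. -/
theorem stmt12 (p : ℕ) (hp : p.Prime) (hpodd : Odd p) (k a m : ℕ) (hk : 1 ≤ k)
    (hm : 0 < m) (hpm : ¬ p ∣ m) :
    Int.sign (∑ d ∈ (p ^ a * m).divisors, jacobiSym d p * (d : ℤ) ^ k)
      = jacobiSym m p := by
  have hk0 : k ≠ 0 := by omega
  -- the summand as an arithmetic function
  set f : ArithmeticFunction ℤ :=
    ⟨fun d => jacobiSym d p * (d : ℤ) ^ k, by simp [zero_pow hk0]⟩ with hf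
  have hfapp : ∀ d : ℕ, f d = jacobiSym d p * (d : ℤ) ^ k := fun d => rfl
  have hfmul : f.IsMultiplicative := by
    refine ⟨by simp [hfapp], fun {x y} _ => ?_⟩
    simp only [hfapp]
    push_cast
    rw [jacobiSym.mul_left]
    ring
  have hF : (↑ζ * f).IsMultiplicative := isMultiplicative_zeta.natCast.mul hfmul
  have hFapp : ∀ x : ℕ, (↑ζ * f) x = ∑ d ∈ x.divisors, jacobiSym d p * (d : ℤ) ^ k := by
    intro x; rw [coe_zeta_mul_apply]; rfl
  -- the key claim for numbers coprime to p
  have key : ∀ n : ℕ, 0 < n → ¬ p ∣ n → Int.sign ((↑ζ * f) n) = jacobiSym n p := by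
    intro n
    induction n using Nat.recOnPosPrimePosCoprime with
    | zero => intro h; omega
    | one =>
        intro _ _
        rw [hF.map_one]
        simp [jacobiSym.one_left]
    | prime_pow q b hq hb =>
        intro _ hpq
        have hqp : ¬ p ∣ q := fun h => hpq (dvd_pow h (by omega))
        have hq2 : 2 ≤ q := hq.two_le
        have hqnp : Nat.Prime q := hq
        have hcopqp : Nat.Coprime q p :=
          (Nat.coprime_primes hqnp hp).mpr (fun h => hqp (h ▸ dvd_rfl))
        have hgcd : (q : ℤ).gcd p = 1 := by
          rw [Int.gcd_natCast_natCast]; exact hcopqp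
        have hε : jacobiSym q p = 1 ∨ jacobiSym q p = -1 :=
          jacobiSym.eq_one_or_neg_one hgcd
        set r : ℤ := jacobiSym q p * (q : ℤ) ^ k with hr
        have hqk : (2 : ℤ) ≤ (q : ℤ) ^ k := by
          calc (2 : ℤ) ≤ (q : ℤ) := by exact_mod_cast hq2
            _ = (q : ℤ) ^ 1 := (pow_one _).symm
            _ ≤ (q : ℤ) ^ k := pow_le_pow_right₀ (by exact_mod_cast hq2.trans' one_le_two) hk
        have habs : 2 ≤ |r| := by
          have habsr : |r| = (q : ℤ) ^ k := by
            rw [hr, abs_mul, abs_pow, Int.abs_natCast]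
            rcases hε with h | h <;> simp [h]
          rw [habsr]; exact hqk
        have hsum : (↑ζ * f) (q ^ b) = ∑ i ∈ range (b + 1), r ^ i := by
          rw [hFapp, Nat.sum_divisors_prime_pow hqnp]
          refine Finset.sum_congr rfl fun i _ => ?_
          push_cast
          rw [jacobiSym.pow_left, hr, mul_pow, ← pow_mul, ← pow_mul, mul_comm i k]
        rw [hsum, sign_geom_sum r habs b]
        have hqb : jacobiSym ((q ^ b : ℕ) : ℤ) p = (jacobiSym q p) ^ b := by
          push_cast
          rw [jacobiSym.pow_left]
        have hpos : (0 : ℤ) < (q : ℤ) ^ (k * b) := by positivity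
        rw [hqb, hr, mul_pow, ← pow_mul]
        rcases hε with h | h
        · rw [h, one_pow, one_mul]
          exact Int.sign_eq_one_of_pos hpos
        · rw [h]
          rcases Nat.even_or_odd b with hb2 | hb2
          · rw [hb2.neg_one_pow, one_mul]
            exact Int.sign_eq_one_of_pos hpos
          · rw [hb2.neg_one_pow, neg_one_mul, Int.sign_neg,
              Int.sign_eq_one_of_pos hpos]
    | coprime a b ha hb hab iha ihb =>
        intro _ hpab
        have hpa : ¬ p ∣ a := fun h => hpab (h.mul_right b)
        have hpb : ¬ p ∣ b := fun h => hpab (h.mul_left a)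
        rw [hF.map_mul_of_coprime hab, Int.sign_mul, iha (by omega) hpa,
          ihb (by omega) hpb]
        rw [Nat.cast_mul, jacobiSym.mul_left]
  -- value at p ^ a is 1
  have hPa : (↑ζ * f) (p ^ a) = 1 := by
    rw [hFapp, Nat.sum_divisors_prime_pow hp]
    have hpp : jacobiSym p p = 0 := by
      have : NeZero p := ⟨hp.ne_zero⟩
      refine jacobiSym.eq_zero_iff_not_coprime.mpr ?_
      rw [Int.gcd_natCast_natCast, Nat.gcd_self]
      exact Nat.Prime.ne_one hp
    rw [Finset.sum_eq_single 0]
    · simp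
    · intro i _ hi
      push_cast
      rw [jacobiSym.pow_left, hpp, zero_pow hi]
      ring
    · simp
  have hcop : Nat.Coprime (p ^ a) m :=
    (Nat.Prime.coprime_iff_not_dvd hp).mpr hpm |>.pow_left a
  have := hF.map_mul_of_coprime hcop
  rw [← hFapp, this, hPa, one_mul]
  exact key m hm hpm
end

section
/- Let p be an odd prime, k ≥ 1 an integer, and let n = p^a m with p ∤ m. Then |∑_{d|n} (d/p) d^k| ≥ m^k · ∏_{ℓ | m, ℓ prime} (1 - ℓ^{-k}). -/
open Finset Nat ArithmeticFunction
open scoped ArithmeticFunction.zeta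

private lemma aux_neg13 (x : ℝ) (hx : 1 ≤ x) (e : ℕ) :
    0 ≤ (-1 : ℝ)^e * (∑ i ∈ range (e+1), (-1)^i * x^i) ∧
    (-1 : ℝ)^e * (∑ i ∈ range (e+1), (-1)^i * x^i) ≤ x^e := by
  induction e with
  | zero => simp
  | succ e ih =>
    have hsq : ((-1:ℝ)^e) * ((-1:ℝ)^e) = 1 := by
      rw [← pow_add]; exact Even.neg_one_pow ⟨e, rfl⟩
    have key : (-1:ℝ)^(e+1) * (∑ i ∈ range (e+2), (-1)^i * x^i)
        = x^(e+1) - (-1)^e * (∑ i ∈ range (e+1), (-1)^i * x^i) := by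
      rw [Finset.sum_range_succ, pow_succ]
      linear_combination x^(e+1) * hsq
    have hpow : x^e ≤ x^(e+1) := by
      calc x^e = x^e * 1 := by ring
        _ ≤ x^e * x := by
            have : (0:ℝ) ≤ x^e := pow_nonneg (by linarith) e
            nlinarith
        _ = x^(e+1) := by ring
    constructor
    · rw [key]; linarith [ih.2]
    · rw [key]; linarith [ih.1]

private lemma aux_pp13 (x ε : ℝ) (hx : 1 ≤ x) (hε : ε = 1 ∨ ε = -1) (e : ℕ) (he : 1 ≤ e) :
    x^e - x^(e-1) ≤ |∑ i ∈ range (e+1), ε^i * x^i| := by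
  have hx0 : (0:ℝ) ≤ x := by linarith
  rcases hε with rfl | rfl
  · simp only [one_pow, one_mul]
    have h1 : x^e ≤ ∑ i ∈ range (e+1), x^i :=
      Finset.single_le_sum (fun i _ => pow_nonneg hx0 i) (self_mem_range_succ e)
    have h2 : (0:ℝ) ≤ x^(e-1) := pow_nonneg hx0 _
    rw [abs_of_nonneg (Finset.sum_nonneg fun i _ => pow_nonneg hx0 i)]
    linarith
  · obtain ⟨h0', h1'⟩ := aux_neg13 x hx (e-1)
    have hee : e - 1 + 1 = e := Nat.succ_pred_eq_of_pos he
    have hsq : ((-1:ℝ)^(e-1)) * ((-1:ℝ)^(e-1)) = 1 := by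
      rw [← pow_add]; exact Even.neg_one_pow ⟨e-1, rfl⟩
    have key : (-1:ℝ)^e * (∑ i ∈ range (e+1), (-1)^i * x^i)
        = x^e - (-1)^(e-1) * (∑ i ∈ range (e-1+1), (-1)^i * x^i) := by
      conv_lhs => rw [← hee]
      rw [Finset.sum_range_succ, pow_succ, hee]
      linear_combination x^e * hsq
    calc x^e - x^(e-1)
        ≤ (-1:ℝ)^e * (∑ i ∈ range (e+1), (-1)^i * x^i) := by rw [key]; linarith
      _ ≤ |(-1:ℝ)^e * (∑ i ∈ range (e+1), (-1)^i * x^i)| := le_abs_self _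
      _ = |∑ i ∈ range (e+1), (-1:ℝ)^i * x^i| := by
          rw [abs_mul, abs_pow, abs_neg, abs_one, one_pow, one_mul]

/-- For an odd prime `p`, `k ≥ 1`, and `n = p^a m` with `p ∤ m`:
`|∑_{d∣n} (d/p) d^k| ≥ m^k ∏_{ℓ ∣ m prime} (1 - ℓ^{-k})`. -/
theorem stmt13 (p : ℕ) (hp : p.Prime) (hpodd : Odd p) (k a m : ℕ) (hk : 1 ≤ k)
    (hm : 0 < m) (hpm : ¬ p ∣ m) :
    (m : ℝ) ^ k * ∏ ℓ ∈ m.primeFactors, (1 - 1 / (ℓ : ℝ) ^ k)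
      ≤ |∑ d ∈ (p ^ a * m).divisors, (jacobiSym d p : ℝ) * (d : ℝ) ^ k| := by
  haveI : NeZero p := ⟨hp.pos.ne'⟩
  have hk0 : k ≠ 0 := by omega
  set g : ArithmeticFunction ℝ :=
    ⟨fun d => (jacobiSym d p : ℝ) * (d : ℝ)^k, by simp [zero_pow hk0]⟩ with hg
  have hgapp : ∀ d : ℕ, g d = (jacobiSym d p : ℝ) * (d : ℝ)^k := fun d => rfl
  have hgm : g.IsMultiplicative := by
    constructor
    · rw [hgapp]; simp [jacobiSym.one_left]
    · intro m n _
      rw [hgapp, hgapp, hgapp]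
      push_cast [jacobiSym.mul_left]
      ring
  have hFmult : (g * (ζ : ArithmeticFunction ℝ)).IsMultiplicative :=
    hgm.mul isMultiplicative_zeta.natCast
  -- reduce to divisors of m
  have hsum : ∑ d ∈ (p ^ a * m).divisors, (jacobiSym d p : ℝ) * (d : ℝ)^k
      = ∑ d ∈ m.divisors, (jacobiSym d p : ℝ) * (d : ℝ)^k := by
    refine (Finset.sum_subset ?_ ?_).symm
    · intro d hd
      rw [Nat.mem_divisors] at hd ⊢
      exact ⟨hd.1.mul_left _, (Nat.mul_pos (Nat.pow_pos (n := a) hp.pos) hm).ne'⟩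
    · intro d hd hd'
      rw [Nat.mem_divisors] at hd
      have hpd : p ∣ d := by
        by_contra hpd
        have hcop : Nat.Coprime d (p ^ a) :=
          Nat.Coprime.pow_right a ((hp.coprime_iff_not_dvd.mpr hpd).symm)
        have hdm : d ∣ m := hcop.dvd_of_dvd_mul_left (mul_comm (p ^ a) m ▸ hd.1)
        exact hd' (Nat.mem_divisors.mpr ⟨hdm, hm.ne'⟩)
      have hz : jacobiSym d p = 0 := by
        apply jacobiSym.eq_zero_iff_not_coprime.mpr
        rw [Int.gcd_natCast_natCast]
        intro h1
        have h2 := Nat.dvd_gcd hpd (dvd_refl p)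
        rw [h1] at h2
        exact hp.one_lt.ne' (Nat.dvd_one.mp h2)
      rw [hz]; simp
  rw [hsum]
  have hFm : ∑ d ∈ m.divisors, (jacobiSym d p : ℝ) * (d : ℝ)^k
      = (g * (ζ : ArithmeticFunction ℝ)) m := by
    rw [coe_mul_zeta_apply]
    exact Finset.sum_congr rfl fun d _ => (hgapp d).symm
  rw [hFm]
  -- factor into prime powers
  rw [ArithmeticFunction.IsMultiplicative.multiplicative_factorization _ hFmult hm.ne']
  rw [Finsupp.prod, Nat.support_factorization, Finset.abs_prod]
  have hmcast : (m:ℝ) = ∏ ℓ ∈ m.primeFactors, (ℓ:ℝ)^(m.factorization ℓ) := by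
    conv_lhs => rw [← Nat.factorization_prod_pow_eq_self hm.ne']
    rw [Finsupp.prod, Nat.support_factorization]
    push_cast
    rfl
  rw [hmcast, ← Finset.prod_pow, ← Finset.prod_mul_distrib]
  apply Finset.prod_le_prod
  · intro ℓ hℓ
    have hℓp : ℓ.Prime := Nat.prime_of_mem_primeFactors hℓ
    have h1 : (1:ℝ) ≤ (ℓ:ℝ)^k := one_le_pow₀ (by exact_mod_cast hℓp.one_lt.le)
    have h2 : 1/(ℓ:ℝ)^k ≤ 1 := by
      rw [div_le_one (by linarith)]; exact h1
    have h3 : (0:ℝ) ≤ ((ℓ:ℝ) ^ m.factorization ℓ) ^ k := by positivity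
    nlinarith
  · intro ℓ hℓ
    have hℓp : ℓ.Prime := Nat.prime_of_mem_primeFactors hℓ
    set e := m.factorization ℓ with hedef
    have he : 1 ≤ e := hℓp.factorization_pos_of_dvd hm.ne' (Nat.dvd_of_mem_primeFactors hℓ)
    have hne : ℓ ≠ p := by
      rintro rfl; exact hpm (Nat.dvd_of_mem_primeFactors hℓ)
    set x : ℝ := (ℓ:ℝ)^k with hxdef
    have hx : (1:ℝ) ≤ x := one_le_pow₀ (by exact_mod_cast hℓp.one_lt.le)
    have hxne : x ≠ 0 := by linarith
    set ε : ℝ := ((jacobiSym ℓ p : ℤ) : ℝ) with hεdef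
    have hε : ε = 1 ∨ ε = -1 := by
      rcases jacobiSym.eq_one_or_neg_one (a := (ℓ:ℤ)) (b := p)
        (by rw [Int.gcd_natCast_natCast]; exact (Nat.coprime_primes hℓp hp).mpr hne)
        with h | h
      · left; rw [hεdef, h]; norm_num
      · right; rw [hεdef, h]; norm_num
    have hval : (g * (ζ : ArithmeticFunction ℝ)) (ℓ ^ e)
        = ∑ i ∈ range (e+1), ε^i * x^i := by
      rw [coe_mul_zeta_apply, Nat.sum_divisors_prime_pow hℓp]
      refine Finset.sum_congr rfl fun i _ => ?_
      rw [hgapp]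
      push_cast [jacobiSym.pow_left]
      rw [← pow_mul, mul_comm i k, pow_mul]
    rw [hval]
    have key : ((ℓ:ℝ) ^ e) ^ k * (1 - 1 / (ℓ:ℝ) ^ k) = x^e - x^(e-1) := by
      have h1 : ((ℓ:ℝ) ^ e) ^ k = x ^ e := by
        rw [hxdef, ← pow_mul, mul_comm e k, pow_mul]
      have h2 : x ^ e = x ^ (e-1) * x := by
        rw [← pow_succ]
        congr 1
        omega
      rw [h1, mul_sub, mul_one, mul_one_div, ← hxdef, h2, mul_div_assoc,
        div_self hxne, mul_one]
    rw [key]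
    exact aux_pp13 x ε hx hε e he
end

section
/- Assume the identity ∏_{j≥1} (1-q^j)^9 / (1-q^{3j})^3 = 1 - 9 ∑_{n≥1} (∑_{d|n} (d/3) d^2) q^n as formal power series. Then for a ≥ 0 and m a positive integer with gcd(3,m) = 1, the sign of the coefficient of q^{3^a m} equals -(m/3). -/
open ArithmeticFunction Finset
open scoped ArithmeticFunction.zeta

private noncomputable def Fchi : ArithmeticFunction ℤ :=
  ⟨fun n => jacobiSym n 3 * (n : ℤ) ^ 2, by simp⟩

private lemma Fchi_mult : Fchi.IsMultiplicative := by
  constructor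
  · show jacobiSym 1 3 * (1:ℤ)^2 = 1
    simp [jacobiSym.one_left]
  · intro m n _
    show jacobiSym (↑(m*n)) 3 * ((m*n : ℕ):ℤ)^2 =
      (jacobiSym m 3 * (m:ℤ)^2) * (jacobiSym n 3 * (n:ℤ)^2)
    push_cast
    rw [jacobiSym.mul_left]
    ring

private noncomputable def Sfun : ArithmeticFunction ℤ := Fchi * ζ

private lemma Sfun_apply (n : ℕ) :
    Sfun n = ∑ d ∈ n.divisors, jacobiSym d 3 * (d : ℤ) ^ 2 := by
  rw [Sfun, coe_mul_zeta_apply]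
  rfl

private lemma Sfun_mult : Sfun.IsMultiplicative :=
  Fchi_mult.mul isMultiplicative_zeta.natCast

private lemma alt_bound (p : ℤ) (hp : 2 ≤ p) (k : ℕ) :
    1 ≤ (-1:ℤ)^k * ∑ i ∈ range (k+1), (-1:ℤ)^i * p^(2*i) ∧
    (-1:ℤ)^k * ∑ i ∈ range (k+1), (-1:ℤ)^i * p^(2*i) ≤ p^(2*k) := by
  induction k with
  | zero => simp
  | succ k ih =>
    obtain ⟨h1, h2⟩ := ih
    rw [Finset.sum_range_succ]
    have hpow : (0:ℤ) < p ^ (2*k) := by positivity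
    have hkey : p ^ (2*(k+1)) = p^(2*k) * p^2 := by ring
    have heven : ((-1:ℤ))^(k+1) * (-1)^(k+1) = 1 := by
      rw [← pow_add]; exact Even.neg_one_pow ⟨k+1, by ring⟩
    have key : (-1:ℤ)^(k+1) *
        ((∑ i ∈ range (k+1), (-1:ℤ)^i * p^(2*i)) + (-1)^(k+1) * p^(2*(k+1)))
        = -((-1:ℤ)^k * ∑ i ∈ range (k+1), (-1:ℤ)^i * p^(2*i)) + p^(2*(k+1)) := by
      rw [mul_add, ← mul_assoc, heven, one_mul, pow_succ]; ring
    rw [key]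
    constructor
    · have hp2 : (3:ℤ) ≤ p^2 := by nlinarith
      have h4 : p^(2*k) * 3 ≤ p^(2*k) * p^2 := mul_le_mul_of_nonneg_left hp2 hpow.le
      have hpow1 : (0:ℤ) + 1 ≤ p^(2*k) := Int.add_one_le_iff.mpr hpow
      rw [hkey]
      linarith
    · linarith [h1, hpow]

private lemma S_pos (m : ℕ) (hm3 : Nat.Coprime 3 m) :
    0 < jacobiSym m 3 * Sfun m := by
  induction m using Nat.recOnPosPrimePosCoprime with
  | prime_pow p k hp hk =>
    have hple : (2:ℤ) ≤ (p:ℤ) := by exact_mod_cast hp.two_le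
    have hcp : Nat.Coprime 3 p :=
      Nat.Coprime.coprime_dvd_right (dvd_pow_self p hk.ne') hm3
    have hg : Int.gcd (p:ℤ) 3 = 1 := by
      rw [show ((3:ℤ)) = ((3:ℕ):ℤ) by norm_num, Int.gcd_natCast_natCast]
      exact hcp.symm
    have hterm : ∀ i, jacobiSym (↑(p^i) : ℤ) 3 * ((p^i : ℕ):ℤ)^2
        = (jacobiSym p 3)^i * (p:ℤ)^(2*i) := by
      intro i
      push_cast
      rw [jacobiSym.pow_left]
      ring
    have hJk : (jacobiSym (↑(p^k)) 3) = (jacobiSym p 3)^k := by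
      push_cast
      rw [jacobiSym.pow_left]
    rw [Sfun_apply, Nat.sum_divisors_prime_pow hp, hJk,
      Finset.sum_congr rfl (fun i _ => hterm i)]
    rcases jacobiSym.eq_one_or_neg_one hg with hε | hε <;> rw [hε]
    · simp only [one_pow, one_mul]
      apply Finset.sum_pos (fun i _ => by positivity) ⟨0, by simp⟩
    · linarith [(alt_bound (p:ℤ) hple k).1]
  | zero => simp at hm3
  | one =>
    simp [Sfun_apply, jacobiSym.one_left]
  | coprime a b ha hb hab iha ihb =>
    rw [Nat.coprime_mul_iff_right] at hm3
    have h1 := iha hm3.1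
    have h2 := ihb hm3.2
    rw [Sfun_mult.map_mul_of_coprime hab]
    push_cast
    rw [jacobiSym.mul_left]
    calc (0:ℤ) < (jacobiSym a 3 * Sfun a) * (jacobiSym b 3 * Sfun b) := mul_pos h1 h2
    _ = jacobiSym a 3 * jacobiSym b 3 * (Sfun a * Sfun b) := by ring

/-- Assuming the expansion `∏_{j≥1}(1-q^j)^9/(1-q^{3j})^3 = 1 - 9∑_{n≥1}(∑_{d∣n}(d/3)d²)qⁿ`,
for `a ≥ 0` and `m` coprime to `3` the sign of the coefficient of `q^{3^a m}` is
`-(m/3)`. -/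
theorem stmt16 (C : ℕ → ℤ) (hC0 : C 0 = 1)
    (hC : ∀ n, 1 ≤ n → C n = -9 * ∑ d ∈ n.divisors, jacobiSym d 3 * (d : ℤ) ^ 2)
    (a m : ℕ) (hm : 0 < m) (hm3 : Nat.gcd 3 m = 1) :
    Int.sign (C (3 ^ a * m)) = -jacobiSym m 3 := by
  have hm3' : Nat.Coprime 3 m := hm3
  have hn : 1 ≤ 3 ^ a * m := Nat.one_le_iff_ne_zero.mpr (by positivity)
  have hSa : Sfun (3 ^ a) = 1 := by
    rw [Sfun_apply, Nat.sum_divisors_prime_pow Nat.prime_three, Finset.sum_range_succ']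
    have hz : ∀ i : ℕ, jacobiSym (((3 ^ (i+1) : ℕ)) : ℤ) 3 * ((3 ^ (i+1) : ℕ):ℤ)^2 = 0 := by
      intro i
      have h33 : jacobiSym 3 3 = 0 :=
        jacobiSym.eq_zero_iff_not_coprime.mpr (by norm_num [Int.gcd])
      push_cast
      rw [jacobiSym.pow_left, h33, zero_pow (Nat.succ_ne_zero i)]
      ring
    rw [Finset.sum_congr rfl (fun i _ => hz i), Finset.sum_const_zero, zero_add]
    show jacobiSym (↑(3^0 : ℕ) : ℤ) 3 * ((3^0 : ℕ):ℤ)^2 = 1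
    norm_num [jacobiSym.one_left]
  have hCeq : C (3 ^ a * m) = -9 * Sfun m := by
    rw [hC _ hn, ← Sfun_apply,
      Sfun_mult.map_mul_of_coprime (Nat.Coprime.pow_left a hm3'), hSa, one_mul]
  have hpos := S_pos m hm3'
  have hg : Int.gcd (m:ℤ) 3 = 1 := by
    rw [show ((3:ℤ)) = ((3:ℕ):ℤ) by norm_num, Int.gcd_natCast_natCast]; exact hm3'.symm
  rcases jacobiSym.eq_one_or_neg_one hg with hε | hε <;> rw [hε] at hpos ⊢
  · have hS : 0 < Sfun m := by linarith
    rw [hCeq, Int.sign_mul, Int.sign_eq_one_of_pos hS]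
    decide
  · have hS : Sfun m < 0 := by linarith
    rw [hCeq, Int.sign_mul, Int.sign_eq_neg_one_of_neg hS]
    decide
end
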